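/- arXiv:2603.19003 — 5 statements merged into one kernel-verified Lean document; each statement's English description precedes it below -/
import Mathlib

section
/- Let (T,w,x) be a finite weighted tree having a unique optimal monomer-dimer configuration MD. For an edge e = {u,v} of T, let T_{(u,v)} and T_{(v,u)} denote the connected components of T − e containing v and u respectively (with restricted weights), and define the messages Z(u,v) := OPT(T_{(u,v)}) − OPT(T_{(u,v)} − v) and Z(v,u) := OPT(T_{(v,u)}) − OPT(T_{(v,u)} − u). Then e is a dimer of MD (i.e. e ∈ MD) if and only if w(e) > Z(u,v) + Z(v,u). -/
open scoped Classical

/-- `M` is a monomer-dimer configuration (matching) of the induced weighted subgraph of `G`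
on the vertex set `S`: all its edges are edges of `G` with both endpoints in `S`, and
its edges are pairwise non-adjacent. -/
def IsMatchingOn {V : Type*} (G : SimpleGraph V) (S : Set V) (M : Finset (Sym2 V)) : Prop :=
  (∀ e ∈ M, e ∈ G.edgeSet ∧ ∀ v, v ∈ e → v ∈ S) ∧
  (∀ e ∈ M, ∀ f ∈ M, e ≠ f → ∀ v, v ∈ e → v ∉ f)

/-- The monomer-dimer weight of `M` on vertex set `S`: the sum of the edge weights of the
dimers plus the sum of the vertex weights of the monomers (vertices of `S` not covered). -/
noncomputable def MDweight {V : Type*} [Fintype V] (w : Sym2 V → ℝ) (x : V → ℝ) (S : Set V)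
    (M : Finset (Sym2 V)) : ℝ :=
  ∑ e ∈ M, w e + ∑ v ∈ Finset.univ.filter (fun v => v ∈ S ∧ ∀ e ∈ M, v ∉ e), x v

/-- `OPT G w x S` is the maximal monomer-dimer weight over matchings of the induced weighted
subgraph of `G` on `S`. -/
noncomputable def OPT {V : Type*} [Fintype V] (G : SimpleGraph V) (w : Sym2 V → ℝ)
    (x : V → ℝ) (S : Set V) : ℝ :=
  sSup {r | ∃ M, IsMatchingOn G S M ∧ MDweight w x S M = r}

/-- `M` is an optimal monomer-dimer configuration of the induced weighted subgraph on `S`. -/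
def IsOptimalOn {V : Type*} [Fintype V] (G : SimpleGraph V) (w : Sym2 V → ℝ) (x : V → ℝ)
    (S : Set V) (M : Finset (Sym2 V)) : Prop :=
  IsMatchingOn G S M ∧ ∀ M', IsMatchingOn G S M' → MDweight w x S M' ≤ MDweight w x S M


lemma OPT_spec {V : Type*} [Fintype V] (G : SimpleGraph V) (w : Sym2 V → ℝ) (x : V → ℝ)
    (S : Set V) : ∃ M, IsMatchingOn G S M ∧ MDweight w x S M = OPT G w x S ∧
      ∀ M', IsMatchingOn G S M' → MDweight w x S M' ≤ OPT G w x S := by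
  set R : Set ℝ := {r | ∃ M, IsMatchingOn G S M ∧ MDweight w x S M = r} with hR
  have hfin : R.Finite := by
    apply (Set.finite_range (MDweight w x S)).subset
    rintro r ⟨M, _, rfl⟩; exact ⟨M, rfl⟩
  have hne : R.Nonempty := ⟨MDweight w x S ∅, ∅, ⟨by simp, by simp⟩, rfl⟩
  have hmem : OPT G w x S ∈ R := hne.csSup_mem hfin
  obtain ⟨M, hM, hw⟩ := hmem
  exact ⟨M, hM, hw, fun M' hM' => le_csSup hfin.bddAbove ⟨M', hM', rfl⟩⟩

lemma aux_union {V : Type*} [Fintype V] (w : Sym2 V → ℝ) (x : V → ℝ) (S₁ S₂ : Set V)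
    (M₁ M₂ : Finset (Sym2 V)) (h1 : ∀ e ∈ M₁, ∀ a, a ∈ e → a ∈ S₁)
    (h2 : ∀ e ∈ M₂, ∀ a, a ∈ e → a ∈ S₂) (hd : Disjoint S₁ S₂) :
    MDweight w x (S₁ ∪ S₂) (M₁ ∪ M₂) = MDweight w x S₁ M₁ + MDweight w x S₂ M₂ := by
  have hdM : Disjoint M₁ M₂ := by
    rw [Finset.disjoint_left]
    intro e he1 he2
    exact Set.disjoint_left.mp hd (h1 e he1 _ (Sym2.out_fst_mem e)) (h2 e he2 _ (Sym2.out_fst_mem e))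
  have hedge : ∑ e ∈ M₁ ∪ M₂, w e = ∑ e ∈ M₁, w e + ∑ e ∈ M₂, w e := Finset.sum_union hdM
  have hQ : ∀ a : V, (a ∈ S₁ ∧ ∀ e ∈ M₁, a ∉ e) → (a ∈ S₁ ∪ S₂ ∧ ∀ e ∈ M₁ ∪ M₂, a ∉ e) := by
    rintro a ⟨hS, hav⟩
    refine ⟨Or.inl hS, fun e he hae => ?_⟩
    rcases Finset.mem_union.mp he with h | h
    · exact hav e h hae
    · exact Set.disjoint_left.mp hd hS (h2 e h a hae)
  have hR : ∀ a : V, (a ∈ S₂ ∧ ∀ e ∈ M₂, a ∉ e) → (a ∈ S₁ ∪ S₂ ∧ ∀ e ∈ M₁ ∪ M₂, a ∉ e) := by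
    rintro a ⟨hS, hav⟩
    refine ⟨Or.inr hS, fun e he hae => ?_⟩
    rcases Finset.mem_union.mp he with h | h
    · exact Set.disjoint_left.mp hd (h1 e h a hae) hS
    · exact hav e h hae
  have hP : ∀ a : V, (a ∈ S₁ ∪ S₂ ∧ ∀ e ∈ M₁ ∪ M₂, a ∉ e) →
      (a ∈ S₁ ∧ ∀ e ∈ M₁, a ∉ e) ∨ (a ∈ S₂ ∧ ∀ e ∈ M₂, a ∉ e) := by
    rintro a ⟨hS, hav⟩
    rcases hS with hS | hS
    · exact Or.inl ⟨hS, fun e he => hav e (Finset.mem_union_left _ he)⟩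
    · exact Or.inr ⟨hS, fun e he => hav e (Finset.mem_union_right _ he)⟩
  have hQR : ∀ a : V, ¬((a ∈ S₁ ∧ ∀ e ∈ M₁, a ∉ e) ∧ (a ∈ S₂ ∧ ∀ e ∈ M₂, a ∉ e)) := by
    rintro a ⟨⟨h1', _⟩, ⟨h2', _⟩⟩
    exact Set.disjoint_left.mp hd h1' h2'
  have hmon : MDweight w x (S₁ ∪ S₂) (M₁ ∪ M₂) - ∑ e ∈ M₁ ∪ M₂, w e =
      (MDweight w x S₁ M₁ - ∑ e ∈ M₁, w e) + (MDweight w x S₂ M₂ - ∑ e ∈ M₂, w e) := by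
    unfold MDweight
    have goal' : ∀ (f g h : V → ℝ), (∀ a : V, f a = g a + h a) →
        (∑ e ∈ M₁ ∪ M₂, w e + ∑ a : V, f a) - ∑ e ∈ M₁ ∪ M₂, w e =
        ((∑ e ∈ M₁, w e + ∑ a : V, g a) - ∑ e ∈ M₁, w e) +
        ((∑ e ∈ M₂, w e + ∑ a : V, h a) - ∑ e ∈ M₂, w e) := by
      intro f g h hfgh
      have : ∑ a : V, f a = ∑ a : V, g a + ∑ a : V, h a := by
        rw [← Finset.sum_add_distrib]; exact Finset.sum_congr rfl fun a _ => hfgh a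
      rw [this]; ring
    rw [Finset.sum_filter, Finset.sum_filter, Finset.sum_filter]
    apply goal'
    intro a
    by_cases hq : a ∈ S₁ ∧ ∀ e ∈ M₁, a ∉ e <;> by_cases hr : a ∈ S₂ ∧ ∀ e ∈ M₂, a ∉ e
    · exact absurd ⟨hq, hr⟩ (hQR a)
    · rw [if_pos (hQ a hq), if_pos hq, if_neg hr, add_zero]
    · rw [if_pos (hR a hr), if_neg hq, if_pos hr, zero_add]
    · rw [if_neg (fun h => (hP a h).elim hq hr), if_neg hq, if_neg hr, add_zero]
  linarith [hmon, hedge]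

lemma aux_matching_union {V : Type*} (G : SimpleGraph V) (S₁ S₂ : Set V)
    (M₁ M₂ : Finset (Sym2 V)) (h1 : IsMatchingOn G S₁ M₁) (h2 : IsMatchingOn G S₂ M₂)
    (hd : Disjoint S₁ S₂) : IsMatchingOn G (S₁ ∪ S₂) (M₁ ∪ M₂) := by
  constructor
  · intro e he
    rcases Finset.mem_union.mp he with h | h
    · exact ⟨(h1.1 e h).1, fun a ha => Or.inl ((h1.1 e h).2 a ha)⟩
    · exact ⟨(h2.1 e h).1, fun a ha => Or.inr ((h2.1 e h).2 a ha)⟩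
  · intro e he f hf hef a hae haf
    rcases Finset.mem_union.mp he with h | h <;> rcases Finset.mem_union.mp hf with h' | h'
    · exact h1.2 e h f h' hef a hae haf
    · exact Set.disjoint_left.mp hd ((h1.1 e h).2 a hae) ((h2.1 f h').2 a haf)
    · exact Set.disjoint_left.mp hd ((h1.1 f h').2 a haf) ((h2.1 e h).2 a hae)
    · exact h2.2 e h f h' hef a hae haf

lemma aux_matching_mono {V : Type*} {G G' : SimpleGraph V} (h : G' ≤ G) (S : Set V)
    (M : Finset (Sym2 V)) (hM : IsMatchingOn G' S M) : IsMatchingOn G S M :=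
  ⟨fun e he => ⟨SimpleGraph.edgeSet_mono h (hM.1 e he).1, (hM.1 e he).2⟩, hM.2⟩

lemma aux_split {V : Type*} (G' : SimpleGraph V) (S S₁ S₂ : Set V) (M : Finset (Sym2 V))
    (hM : IsMatchingOn G' S M)
    (hcomp : ∀ e ∈ M, (∀ a, a ∈ e → a ∈ S₁) ∨ (∀ a, a ∈ e → a ∈ S₂)) :
    ∃ M₁ M₂, IsMatchingOn G' S₁ M₁ ∧ IsMatchingOn G' S₂ M₂ ∧ M = M₁ ∪ M₂ := by
  refine ⟨M.filter (fun e => ∀ a, a ∈ e → a ∈ S₁), M.filter (fun e => ¬ ∀ a, a ∈ e → a ∈ S₁),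
    ⟨?_, ?_⟩, ⟨?_, ?_⟩, (Finset.filter_union_filter_not_eq _ M).symm⟩
  · intro e he
    rw [Finset.mem_filter] at he
    exact ⟨(hM.1 e he.1).1, he.2⟩
  · intro e he f hf
    rw [Finset.mem_filter] at he hf
    exact hM.2 e he.1 f hf.1
  · intro e he
    rw [Finset.mem_filter] at he
    exact ⟨(hM.1 e he.1).1, (hcomp e he.1).resolve_left he.2⟩
  · intro e he f hf
    rw [Finset.mem_filter] at he hf
    exact hM.2 e he.1 f hf.1

/-- For a finite weighted tree `(T,w,x)` with a unique optimal monomer-dimer configuration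
`MD` and an edge `e = {u,v}`, with `T_(u,v)` (resp. `T_(v,u)`) the component of `T - e`
containing `v` (resp. `u`) and the messages
`Z(u,v) = OPT(T_(u,v)) - OPT(T_(u,v) - v)`, `Z(v,u) = OPT(T_(v,u)) - OPT(T_(v,u) - u)`,
one has `e ∈ MD ↔ w e > Z(u,v) + Z(v,u)`. -/
theorem stmt2 {V : Type*} [Fintype V] (G : SimpleGraph V) (hT : G.IsTree)
    (w : Sym2 V → ℝ) (x : V → ℝ) (u v : V) (he : G.Adj u v)
    (MD : Finset (Sym2 V)) (hMD : IsOptimalOn G w x Set.univ MD)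
    (huniq : ∀ M, IsOptimalOn G w x Set.univ M → M = MD)
    (G' : SimpleGraph V) (hG' : G' = G.deleteEdges {s(u,v)})
    (Cuv Cvu : Set V) (hCuv : Cuv = {a | G'.Reachable v a}) (hCvu : Cvu = {a | G'.Reachable u a})
    (Zuv Zvu : ℝ)
    (hZuv : Zuv = OPT G' w x Cuv - OPT G' w x (Cuv \ {v}))
    (hZvu : Zvu = OPT G' w x Cvu - OPT G' w x (Cvu \ {u})) :
    s(u,v) ∈ MD ↔ w s(u,v) > Zuv + Zvu := by
  have hG'leG : G' ≤ G := by rw [hG']; exact SimpleGraph.deleteEdges_le _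
  have hnr : ¬ G'.Reachable u v := by
    have hb := (SimpleGraph.isAcyclic_iff_forall_adj_isBridge.mp hT.2) he
    rw [SimpleGraph.isBridge_iff] at hb
    rw [hG']
    exact hb
  have hvC : v ∈ Cuv := by rw [hCuv]; exact SimpleGraph.Reachable.refl v
  have huC : u ∈ Cvu := by rw [hCvu]; exact SimpleGraph.Reachable.refl u
  have huCuv : u ∉ Cuv := by
    intro h; rw [hCuv] at h; exact hnr (SimpleGraph.Reachable.symm h)
  have hvCvu : v ∉ Cvu := by
    intro h; rw [hCvu] at h; exact hnr h
  have hcover : ∀ a, a ∈ Cvu ∨ a ∈ Cuv := by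
    have key : ∀ {b a : V}, G.Walk b a →
        (G'.Reachable u b ∨ G'.Reachable v b) → (G'.Reachable u a ∨ G'.Reachable v a) := by
      intro b a p
      induction p with
      | nil => exact id
      | @cons b c d h q ih =>
        intro hb
        apply ih
        by_cases hbc : s(b, c) = s(u, v)
        · rw [Sym2.eq_iff] at hbc
          rcases hbc with ⟨rfl, rfl⟩ | ⟨rfl, rfl⟩
          · exact Or.inr (SimpleGraph.Reachable.refl _)
          · exact Or.inl (SimpleGraph.Reachable.refl _)
        · have hadj : G'.Adj b c := by
            rw [hG']
            exact SimpleGraph.deleteEdges_adj.mpr ⟨h, by simpa using hbc⟩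
          exact hb.imp (fun hr => hr.trans hadj.reachable) (fun hr => hr.trans hadj.reachable)
    intro a
    obtain ⟨p⟩ := hT.1.preconnected u a
    have h := key p (Or.inl (SimpleGraph.Reachable.refl u))
    rw [hCvu, hCuv]
    exact h
  have hdisj : Disjoint Cuv Cvu := by
    rw [Set.disjoint_left]
    intro a h1 h2
    rw [hCuv] at h1; rw [hCvu] at h2
    exact hnr (h2.trans (SimpleGraph.Reachable.symm h1))
  have htransUv : ∀ a b, G'.Adj a b → a ∈ Cuv → b ∈ Cuv := by
    intro a b hab ha
    rw [hCuv] at ha ⊢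
    exact SimpleGraph.Reachable.trans ha hab.reachable
  have htransVu : ∀ a b, G'.Adj a b → a ∈ Cvu → b ∈ Cvu := by
    intro a b hab ha
    rw [hCvu] at ha ⊢
    exact SimpleGraph.Reachable.trans ha hab.reachable
  have hedgecomp : ∀ e ∈ G'.edgeSet, (∀ a, a ∈ e → a ∈ Cuv) ∨ (∀ a, a ∈ e → a ∈ Cvu) := by
    intro e
    induction e using Sym2.ind with
    | _ a b =>
      intro hab
      rw [SimpleGraph.mem_edgeSet] at hab
      rcases hcover a with h | h
      · right
        intro c hc
        rcases Sym2.mem_iff.mp hc with rfl | rfl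
        · exact h
        · exact htransVu a c hab h
      · left
        intro c hc
        rcases Sym2.mem_iff.mp hc with rfl | rfl
        · exact h
        · exact htransUv a c hab h
  have he0G' : s(u,v) ∉ G'.edgeSet := by
    rw [hG', SimpleGraph.mem_edgeSet]
    simp
  have hU1 : Cuv ∪ Cvu = (Set.univ : Set V) :=
    Set.eq_univ_of_forall fun a => (hcover a).elim Or.inr Or.inl
  have hU2 : ({u, v} : Set V) ∪ ((Cuv \ {v}) ∪ (Cvu \ {u})) = Set.univ := by
    apply Set.eq_univ_of_forall
    intro a
    simp only [Set.mem_union, Set.mem_diff, Set.mem_insert_iff, Set.mem_singleton_iff]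
    rcases hcover a with h | h <;> by_cases hau : a = u <;> by_cases hav : a = v <;> tauto
  have hd2 : Disjoint ((Cuv \ {v}) : Set V) (Cvu \ {u}) :=
    Disjoint.mono Set.diff_subset Set.diff_subset hdisj
  have hd3 : Disjoint ({u, v} : Set V) ((Cuv \ {v}) ∪ (Cvu \ {u})) := by
    rw [Set.disjoint_left]
    intro a ha hb
    simp only [Set.mem_insert_iff, Set.mem_singleton_iff] at ha
    simp only [Set.mem_union, Set.mem_diff, Set.mem_singleton_iff] at hb
    rcases ha with rfl | rfl <;> rcases hb with ⟨h1, h2⟩ | ⟨h1, h2⟩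
    · exact huCuv h1
    · exact h2 rfl
    · exact h2 rfl
    · exact hvCvu h1
  obtain ⟨NA, hNA, hNAw, hNAub⟩ := OPT_spec G' w x Cuv
  obtain ⟨NA', hNA', hNA'w, hNA'ub⟩ := OPT_spec G' w x (Cuv \ {v})
  obtain ⟨NB, hNB, hNBw, hNBub⟩ := OPT_spec G' w x Cvu
  obtain ⟨NB', hNB', hNB'w, hNB'ub⟩ := OPT_spec G' w x (Cvu \ {u})
  -- the combined matching NA ∪ NB
  have hNmatch : IsMatchingOn G Set.univ (NA ∪ NB) := by
    rw [← hU1]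
    exact aux_matching_mono hG'leG _ _ (aux_matching_union G' _ _ _ _ hNA hNB hdisj)
  have hNweight : MDweight w x Set.univ (NA ∪ NB) = OPT G' w x Cuv + OPT G' w x Cvu := by
    rw [← hU1, aux_union w x Cuv Cvu NA NB (fun e he' => (hNA.1 e he').2)
      (fun e he' => (hNB.1 e he').2) hdisj, hNAw, hNBw]
  -- the single-edge matching
  have he0uv : ∀ e ∈ ({s(u,v)} : Finset (Sym2 V)), ∀ a, a ∈ e → a ∈ ({u, v} : Set V) := by
    intro e hme a hae
    rw [Finset.mem_singleton] at hme
    subst hme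
    rcases Sym2.mem_iff.mp hae with rfl | rfl
    · exact Or.inl rfl
    · exact Or.inr rfl
  have hsingle : IsMatchingOn G ({u, v} : Set V) {s(u,v)} := by
    constructor
    · intro e hme
      have he2 := hme
      rw [Finset.mem_singleton] at he2
      subst he2
      exact ⟨(G.mem_edgeSet).mpr he, he0uv _ hme⟩
    · intro e hme f hmf hef
      rw [Finset.mem_singleton] at hme hmf
      exact absurd (hme.trans hmf.symm) hef
  have hsingleW : MDweight w x ({u, v} : Set V) {s(u,v)} = w s(u,v) := by
    unfold MDweight
    rw [Finset.sum_singleton, Finset.sum_filter, Finset.sum_eq_zero, add_zero]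
    intro a _
    rw [if_neg]
    rintro ⟨ha, hav⟩
    simp only [Set.mem_insert_iff, Set.mem_singleton_iff] at ha
    rcases ha with h | h
    · exact hav (s(u,v)) (Finset.mem_singleton_self _) (by rw [h]; exact Sym2.mem_mk_left u v)
    · exact hav (s(u,v)) (Finset.mem_singleton_self _) (by rw [h]; exact Sym2.mem_mk_right u v)
  -- the combined matching with the edge s(u,v)
  have hinner := aux_matching_union G' _ _ _ _ hNA' hNB' hd2
  have hMstar : IsMatchingOn G Set.univ ({s(u,v)} ∪ (NA' ∪ NB')) := by
    rw [← hU2]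
    exact aux_matching_union G _ _ _ _ hsingle (aux_matching_mono hG'leG _ _ hinner) hd3
  have hMstarW : MDweight w x Set.univ ({s(u,v)} ∪ (NA' ∪ NB')) =
      w s(u,v) + (OPT G' w x (Cuv \ {v}) + OPT G' w x (Cvu \ {u})) := by
    rw [← hU2, aux_union w x _ _ _ _ he0uv (fun e he' => (hinner.1 e he').2) hd3, hsingleW,
      aux_union w x _ _ _ _ (fun e he' => (hNA'.1 e he').2) (fun e he' => (hNB'.1 e he').2) hd2,
      hNA'w, hNB'w]
  -- upper bound for matchings not containing s(u,v)
  have hsplit_not : ∀ M, IsMatchingOn G Set.univ M → s(u,v) ∉ M →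
      MDweight w x Set.univ M ≤ OPT G' w x Cuv + OPT G' w x Cvu := by
    intro M hM he0M
    have hMG' : IsMatchingOn G' Set.univ M := by
      refine ⟨fun e heM => ⟨?_, (hM.1 e heM).2⟩, hM.2⟩
      have hne : e ≠ s(u,v) := fun h => he0M (h ▸ heM)
      rw [hG', SimpleGraph.edgeSet_deleteEdges]
      exact ⟨(hM.1 e heM).1, by simpa using hne⟩
    obtain ⟨M₁, M₂, hM₁, hM₂, rfl⟩ := aux_split G' Set.univ Cuv Cvu M hMG'
      (fun e heM => hedgecomp e (hMG'.1 e heM).1)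
    calc MDweight w x Set.univ (M₁ ∪ M₂)
        = MDweight w x Cuv M₁ + MDweight w x Cvu M₂ := by
          rw [← hU1]
          exact aux_union w x _ _ _ _ (fun e he' => (hM₁.1 e he').2)
            (fun e he' => (hM₂.1 e he').2) hdisj
      _ ≤ _ := add_le_add (hNAub M₁ hM₁) (hNBub M₂ hM₂)
  -- upper bound for matchings containing s(u,v)
  have hsplit_in : ∀ M, IsMatchingOn G Set.univ M → s(u,v) ∈ M →
      MDweight w x Set.univ M ≤
        w s(u,v) + (OPT G' w x (Cuv \ {v}) + OPT G' w x (Cvu \ {u})) := by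
    intro M hM he0M
    set M' := M.erase (s(u,v)) with hM'def
    have havoid : ∀ e ∈ M', ∀ a, a ∈ e → a ≠ u ∧ a ≠ v := by
      intro e heM' a hae
      have hne : e ≠ s(u,v) := Finset.ne_of_mem_erase heM'
      have heM : e ∈ M := Finset.mem_of_mem_erase heM'
      constructor
      · rintro rfl
        exact hM.2 _ he0M e heM (Ne.symm hne) a (Sym2.mem_mk_left _ _) hae
      · rintro rfl
        exact hM.2 _ he0M e heM (Ne.symm hne) a (Sym2.mem_mk_right _ _) hae
    have hM'G' : IsMatchingOn G' Set.univ M' := by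
      refine ⟨fun e heM' => ⟨?_, (hM.1 e (Finset.mem_of_mem_erase heM')).2⟩,
        fun e heM' f hfM' => hM.2 e (Finset.mem_of_mem_erase heM') f (Finset.mem_of_mem_erase hfM')⟩
      rw [hG', SimpleGraph.edgeSet_deleteEdges]
      exact ⟨(hM.1 e (Finset.mem_of_mem_erase heM')).1, by simpa using Finset.ne_of_mem_erase heM'⟩
    have hcomp' : ∀ e ∈ M', (∀ a, a ∈ e → a ∈ Cuv \ {v}) ∨ (∀ a, a ∈ e → a ∈ Cvu \ {u}) := by
      intro e heM'
      rcases hedgecomp e (hM'G'.1 e heM').1 with h | h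
      · left
        intro a hae
        exact ⟨h a hae, by simpa using (havoid e heM' a hae).2⟩
      · right
        intro a hae
        exact ⟨h a hae, by simpa using (havoid e heM' a hae).1⟩
    obtain ⟨M₁, M₂, hM₁, hM₂, hM'eq⟩ :=
      aux_split G' Set.univ (Cuv \ {v}) (Cvu \ {u}) M' hM'G' hcomp'
    have hMeq : M = {s(u,v)} ∪ (M₁ ∪ M₂) := by
      rw [← hM'eq, ← Finset.insert_eq, hM'def]
      exact (Finset.insert_erase he0M).symm
    have hinner2 := aux_matching_union G' _ _ _ _ hM₁ hM₂ hd2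
    rw [hMeq, ← hU2, aux_union w x _ _ _ _ he0uv (fun e he' => (hinner2.1 e he').2) hd3,
      hsingleW,
      aux_union w x _ _ _ _ (fun e he' => (hM₁.1 e he').2) (fun e he' => (hM₂.1 e he').2) hd2]
    exact add_le_add (le_refl _) (add_le_add (hNA'ub M₁ hM₁) (hNB'ub M₂ hM₂))
  constructor
  · intro he0MD
    by_contra hnotgt
    push_neg at hnotgt
    rw [hZuv, hZvu] at hnotgt
    have h1 := hsplit_in MD hMD.1 he0MD
    have h2 := hMD.2 (NA ∪ NB) hNmatch
    rw [hNweight] at h2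
    have hNopt : IsOptimalOn G w x Set.univ (NA ∪ NB) := by
      refine ⟨hNmatch, fun M' hM'' => ?_⟩
      have h3 := hMD.2 M' hM''
      rw [hNweight]
      linarith
    have heq := huniq _ hNopt
    apply he0G'
    have he0N : s(u,v) ∈ NA ∪ NB := heq ▸ he0MD
    rcases Finset.mem_union.mp he0N with h | h
    · exact (hNA.1 _ h).1
    · exact (hNB.1 _ h).1
  · intro hgt
    rw [hZuv, hZvu] at hgt
    by_contra he0MD
    have h1 := hsplit_not MD hMD.1 he0MD
    have h2 := hMD.2 _ hMstar
    rw [hMstarW] at h2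
    linarith
end

section
/- Let (T,w,x) be a finite weighted tree. For every ordered pair (u,v) of adjacent vertices of T, let T_{(u,v)} be the connected component of T − {u,v} containing v and define Z(u,v) := OPT(T_{(u,v)}) − OPT(T_{(u,v)} − v). Then for every ordered pair (u,v) of adjacent vertices, Z(u,v) = max( x(v), max_{u' ∼ v, u' ≠ u} ( w(v,u') − Z(v,u') ) ), where the inner maximum ranges over the neighbours u' of v in T other than u and is taken to be −∞ when this set is empty (so that Z(u,v) = x(v) when u is the only neighbour of v). -/
open scoped Classical

set_option linter.unusedSectionVars false
set_option linter.unusedVariables false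

section aux
variable {V : Type*} [Fintype V] {G : SimpleGraph V} {w : Sym2 V → ℝ} {x : V → ℝ} {S : Set V}

lemma optset_eq (G : SimpleGraph V) (w : Sym2 V → ℝ) (x : V → ℝ) (S : Set V) :
    {r | ∃ M, IsMatchingOn G S M ∧ MDweight w x S M = r}
      = (MDweight w x S) '' {M | IsMatchingOn G S M} := by
  ext r; simp only [Set.mem_image, Set.mem_setOf_eq, eq_comm, and_comm]


lemma optset_finite (G : SimpleGraph V) (w : Sym2 V → ℝ) (x : V → ℝ) (S : Set V) :
    {r | ∃ M, IsMatchingOn G S M ∧ MDweight w x S M = r}.Finite := by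
  rw [optset_eq]; exact (Set.toFinite _).image _

lemma empty_matching (G : SimpleGraph V) (S : Set V) : IsMatchingOn G S (∅ : Finset (Sym2 V)) := by
  constructor <;> simp

lemma optset_nonempty (G : SimpleGraph V) (w : Sym2 V → ℝ) (x : V → ℝ) (S : Set V) :
    {r | ∃ M, IsMatchingOn G S M ∧ MDweight w x S M = r}.Nonempty :=
  ⟨_, ⟨∅, empty_matching G S, rfl⟩⟩

lemma le_OPT {M : Finset (Sym2 V)} (hM : IsMatchingOn G S M) :
    MDweight w x S M ≤ OPT G w x S :=
  le_csSup ((optset_finite G w x S).bddAbove) ⟨M, hM, rfl⟩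

lemma OPT_le {c : ℝ} (h : ∀ M, IsMatchingOn G S M → MDweight w x S M ≤ c) :
    OPT G w x S ≤ c := by
  apply csSup_le (optset_nonempty G w x S)
  rintro r ⟨M, hM, rfl⟩; exact h M hM

lemma exists_optimal (G : SimpleGraph V) (w : Sym2 V → ℝ) (x : V → ℝ) (S : Set V) :
    ∃ M, IsMatchingOn G S M ∧ MDweight w x S M = OPT G w x S := by
  have := (optset_nonempty G w x S).csSup_mem (optset_finite G w x S)
  obtain ⟨M, hM, h⟩ := this
  exact ⟨M, hM, h⟩

lemma OPT_congr {G₂ : SimpleGraph V}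
    (h : ∀ e : Sym2 V, (∀ a ∈ e, a ∈ S) → (e ∈ G.edgeSet ↔ e ∈ G₂.edgeSet)) :
    OPT G w x S = OPT G₂ w x S := by
  have : ∀ M, IsMatchingOn G S M ↔ IsMatchingOn G₂ S M := by
    intro M
    unfold IsMatchingOn
    constructor <;> rintro ⟨h1, h2⟩ <;> refine ⟨fun e he => ?_, h2⟩
    · obtain ⟨he1, he2⟩ := h1 e he
      exact ⟨(h e he2).1 he1, he2⟩
    · obtain ⟨he1, he2⟩ := h1 e he
      exact ⟨(h e he2).2 he1, he2⟩
  unfold OPT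
  congr 1; ext r; simp only [Set.mem_setOf_eq, this]

end aux

noncomputable def ind (p : Prop) (r : ℝ) : ℝ := by
  classical exact if p then r else 0

section aux2
variable {V : Type*} [Fintype V] {G : SimpleGraph V} {w : Sym2 V → ℝ} {x : V → ℝ}
  {S A B : Set V} {M MA MB : Finset (Sym2 V)}

lemma matching_mono (hS : S ⊆ A) (hM : IsMatchingOn G S M) : IsMatchingOn G A M :=
  ⟨fun e he => ⟨(hM.1 e he).1, fun v hv => hS ((hM.1 e he).2 v hv)⟩, hM.2⟩

lemma matching_shrink (hM : IsMatchingOn G S M) (hA : A ⊆ S)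
    (h : ∀ e ∈ M, ∀ v ∈ e, v ∈ A) : IsMatchingOn G A M :=
  ⟨fun e he => ⟨(hM.1 e he).1, h e he⟩, hM.2⟩

lemma ind_pos {p : Prop} {r : ℝ} (h : p) : ind p r = r := by unfold ind; exact if_pos h
lemma ind_neg {p : Prop} {r : ℝ} (h : ¬p) : ind p r = 0 := by unfold ind; exact if_neg h
lemma ind_congr {p q : Prop} {r : ℝ} (h : p ↔ q) : ind p r = ind q r := by
  unfold ind; exact if_congr h rfl rfl

lemma MDweight_eq (w : Sym2 V → ℝ) (x : V → ℝ) (S : Set V) (M : Finset (Sym2 V)) :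
    MDweight w x S M
      = ∑ e ∈ M, w e + ∑ v : V, ind (v ∈ S ∧ ∀ e ∈ M, v ∉ e) (x v) := by
  unfold MDweight
  congr 1
  rw [Finset.sum_filter]
  refine Finset.sum_congr rfl fun v _ => ?_
  by_cases h : (v ∈ S ∧ ∀ e ∈ M, v ∉ e)
  · rw [if_pos h, ind_pos h]
  · rw [if_neg h, ind_neg h]

/-- Removing an uncovered vertex from the vertex set. -/
lemma MDweight_sdiff_singleton {v : V} (hv : v ∈ S) (hunc : ∀ e ∈ M, v ∉ e) :
    MDweight w x S M = x v + MDweight w x (S \ {v}) M := by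
  rw [MDweight_eq, MDweight_eq]
  have h1 := Finset.sum_eq_sum_sdiff_singleton_add (Finset.mem_univ v)
    (fun a => ind (a ∈ S ∧ ∀ e ∈ M, a ∉ e) (x a))
  have h2 := Finset.sum_eq_sum_sdiff_singleton_add (Finset.mem_univ v)
    (fun a => ind (a ∈ S \ {v} ∧ ∀ e ∈ M, a ∉ e) (x a))
  rw [h1, h2, ind_pos ⟨hv, hunc⟩, ind_neg (by simp)]
  have h3 : ∀ a ∈ Finset.univ \ {v},
      ind (a ∈ S ∧ ∀ e ∈ M, a ∉ e) (x a)
        = ind (a ∈ S \ {v} ∧ ∀ e ∈ M, a ∉ e) (x a) := by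
    intro a ha
    have hav : a ≠ v := by simpa using ha
    refine ind_congr ?_
    simp [Set.mem_diff, hav]
  rw [Finset.sum_congr rfl h3]
  ring

/-- Inserting a dimer `s(a,b)` while removing `a, b` from the vertex set. -/
lemma MDweight_insert_edge {a b : V} (hab : a ≠ b) (ha : a ∈ S) (hb : b ∈ S)
    (hnm : s(a,b) ∉ M) :
    MDweight w x S (insert s(a,b) M) = w s(a,b) + MDweight w x (S \ {a,b}) M := by
  rw [MDweight_eq, MDweight_eq, Finset.sum_insert hnm]
  have h3 : ∀ c ∈ Finset.univ,
      ind (c ∈ S ∧ ∀ e ∈ insert s(a,b) M, c ∉ e) (x c)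
        = ind (c ∈ S \ {a,b} ∧ ∀ e ∈ M, c ∉ e) (x c) := by
    intro c _
    refine ind_congr ?_
    constructor
    · rintro ⟨hc, hu⟩
      have hce : c ∉ s(a,b) := hu _ (Finset.mem_insert_self _ _)
      rw [Sym2.mem_iff] at hce
      push_neg at hce
      exact ⟨⟨hc, by simp [hce.1, hce.2]⟩, fun e he => hu e (Finset.mem_insert_of_mem he)⟩
    · rintro ⟨⟨hc, hcab⟩, hu⟩
      simp only [Set.mem_insert_iff, Set.mem_singleton_iff, not_or] at hcab
      refine ⟨hc, fun e he => ?_⟩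
      rcases Finset.mem_insert.mp he with rfl | he
      · rw [Sym2.mem_iff]; push_neg; exact hcab
      · exact hu e he
  rw [Finset.sum_congr rfl h3]
  ring

lemma edges_disjoint (hd : Disjoint A B) (hA : ∀ e ∈ MA, ∀ v ∈ e, v ∈ A)
    (hB : ∀ e ∈ MB, ∀ v ∈ e, v ∈ B) : Disjoint MA MB := by
  rw [Finset.disjoint_left]
  intro e heA heB
  induction e with
  | h p q =>
    exact (hd.ne_of_mem (hA _ heA p (by simp)) (hB _ heB p (by simp))) rfl

lemma matching_union (hd : Disjoint A B)
    (hMA : IsMatchingOn G A MA) (hMB : IsMatchingOn G B MB) :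
    IsMatchingOn G (A ∪ B) (MA ∪ MB) := by
  have hA : ∀ e ∈ MA, ∀ v ∈ e, v ∈ A := fun e he => (hMA.1 e he).2
  have hB : ∀ e ∈ MB, ∀ v ∈ e, v ∈ B := fun e he => (hMB.1 e he).2
  constructor
  · intro e he
    rcases Finset.mem_union.mp he with he | he
    · exact ⟨(hMA.1 e he).1, fun v hv => Or.inl (hA e he v hv)⟩
    · exact ⟨(hMB.1 e he).1, fun v hv => Or.inr (hB e he v hv)⟩
  · intro e he f hf hef v hve hvf
    rcases Finset.mem_union.mp he with he | he <;> rcases Finset.mem_union.mp hf with hf | hf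
    · exact hMA.2 e he f hf hef v hve hvf
    · exact hd.ne_of_mem (hA e he v hve) (hB f hf v hvf) rfl
    · exact hd.ne_of_mem (hA f hf v hvf) (hB e he v hve) rfl
    · exact hMB.2 e he f hf hef v hve hvf

lemma MDweight_union (hd : Disjoint A B) (hA : ∀ e ∈ MA, ∀ v ∈ e, v ∈ A)
    (hB : ∀ e ∈ MB, ∀ v ∈ e, v ∈ B) :
    MDweight w x (A ∪ B) (MA ∪ MB) = MDweight w x A MA + MDweight w x B MB := by
  rw [MDweight_eq, MDweight_eq, MDweight_eq,
    Finset.sum_union (edges_disjoint hd hA hB)]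
  have h3 : ∀ c ∈ Finset.univ,
      ind (c ∈ A ∪ B ∧ ∀ e ∈ MA ∪ MB, c ∉ e) (x c)
        = ind (c ∈ A ∧ ∀ e ∈ MA, c ∉ e) (x c)
          + ind (c ∈ B ∧ ∀ e ∈ MB, c ∉ e) (x c) := by
    intro c _
    have hkey : (c ∈ A ∪ B ∧ ∀ e ∈ MA ∪ MB, c ∉ e)
        ↔ ((c ∈ A ∧ ∀ e ∈ MA, c ∉ e) ∨ (c ∈ B ∧ ∀ e ∈ MB, c ∉ e)) := by
      constructor
      · rintro ⟨hc | hc, hu⟩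
        · exact Or.inl ⟨hc, fun e he => hu e (Finset.mem_union_left _ he)⟩
        · exact Or.inr ⟨hc, fun e he => hu e (Finset.mem_union_right _ he)⟩
      · rintro (⟨hc, hu⟩ | ⟨hc, hu⟩)
        · refine ⟨Or.inl hc, fun e he => ?_⟩
          rcases Finset.mem_union.mp he with he | he
          · exact hu e he
          · exact fun hv => hd.ne_of_mem hc (hB e he c hv) rfl
        · refine ⟨Or.inr hc, fun e he => ?_⟩
          rcases Finset.mem_union.mp he with he | he
          · exact fun hv => hd.ne_of_mem (hA e he c hv) hc rfl
          · exact hu e he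
    by_cases h1 : (c ∈ A ∧ ∀ e ∈ MA, c ∉ e) <;> by_cases h2 : (c ∈ B ∧ ∀ e ∈ MB, c ∉ e)
    · exact absurd rfl (hd.ne_of_mem h1.1 h2.1)
    · rw [ind_pos (hkey.mpr (Or.inl h1)), ind_pos h1, ind_neg h2]; ring
    · rw [ind_pos (hkey.mpr (Or.inr h2)), ind_neg h1, ind_pos h2]; ring
    · rw [ind_neg (fun h => (hkey.mp h).elim h1 h2), ind_neg h1, ind_neg h2]; ring
  rw [Finset.sum_congr rfl h3, Finset.sum_add_distrib]
  ring

end aux2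

section aux2b
variable {V : Type*} [Fintype V] {G : SimpleGraph V} {w : Sym2 V → ℝ} {x : V → ℝ}
  {S A B : Set V} {M M' : Finset (Sym2 V)}

lemma matching_subset (hM : IsMatchingOn G S M) (h : M' ⊆ M) : IsMatchingOn G S M' :=
  ⟨fun e he => hM.1 e (h he), fun e he f hf => hM.2 e (h he) f (h hf)⟩

lemma OPT_union (hd : Disjoint A B) (hsep : ∀ a ∈ A, ∀ b ∈ B, ¬ G.Adj a b) :
    OPT G w x (A ∪ B) = OPT G w x A + OPT G w x B := by
  apply le_antisymm
  · apply OPT_le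
    intro M hM
    have hsplit : ∀ e ∈ M, (∀ z ∈ e, z ∈ A) ∨ (∀ z ∈ e, z ∈ B) := by
      intro e he
      induction e with
      | h p q =>
        have hpq : G.Adj p q := (SimpleGraph.mem_edgeSet _).mp (hM.1 _ he).1
        have hp : p ∈ A ∪ B := (hM.1 _ he).2 p (by simp)
        have hq : q ∈ A ∪ B := (hM.1 _ he).2 q (by simp)
        rcases hp with hp | hp <;> rcases hq with hq | hq
        · left; intro z hz; rcases Sym2.mem_iff.mp hz with rfl | rfl <;> assumption
        · exact absurd hpq (hsep p hp q hq)
        · exact absurd hpq.symm (hsep q hq p hp)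
        · right; intro z hz; rcases Sym2.mem_iff.mp hz with rfl | rfl <;> assumption
    classical
    set MA := M.filter (fun e => ∀ z ∈ e, z ∈ A) with hMAdef
    set MB := M.filter (fun e => ¬ ∀ z ∈ e, z ∈ A) with hMBdef
    have hMsplit : M = MA ∪ MB := by
      rw [hMAdef, hMBdef, ← Finset.filter_or]
      refine (Finset.filter_true_of_mem fun e _ => ?_).symm
      exact em _
    have hMAv : ∀ e ∈ MA, ∀ z ∈ e, z ∈ A := by
      intro e he; exact (Finset.mem_filter.mp he).2
    have hMBv : ∀ e ∈ MB, ∀ z ∈ e, z ∈ B := by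
      intro e he
      have h1 := Finset.mem_filter.mp he
      exact (hsplit e h1.1).resolve_left h1.2
    have hMAm : IsMatchingOn G A MA :=
      matching_shrink (matching_subset hM (hMsplit ▸ Finset.subset_union_left))
        Set.subset_union_left hMAv
    have hMBm : IsMatchingOn G B MB :=
      matching_shrink (matching_subset hM (hMsplit ▸ Finset.subset_union_right))
        Set.subset_union_right hMBv
    calc MDweight w x (A ∪ B) M = MDweight w x A MA + MDweight w x B MB := by
          rw [hMsplit] at *; exact MDweight_union hd hMAv hMBv
      _ ≤ OPT G w x A + OPT G w x B := add_le_add (le_OPT hMAm) (le_OPT hMBm)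
  · obtain ⟨MA, hMA, hwA⟩ := exists_optimal G w x A
    obtain ⟨MB, hMB, hwB⟩ := exists_optimal G w x B
    have h1 := le_OPT (w := w) (x := x) (matching_union hd hMA hMB)
    rw [MDweight_union hd (fun e he => (hMA.1 e he).2) (fun e he => (hMB.1 e he).2),
      hwA, hwB] at h1
    exact h1

end aux2b

section aux3
variable {V : Type*} {G : SimpleGraph V}

/-- Transfer reachability from one deleted-edge graph to another, provided no endpoint of the
second deleted edge is reachable from the source. -/
lemma reach_transfer {e₂ : Sym2 V} {D : Set (Sym2 V)} {p q : V}
    (h : (G.deleteEdges D).Reachable p q)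
    (hr : ∀ z ∈ e₂, ¬ (G.deleteEdges D).Reachable p z) :
    (G.deleteEdges {e₂}).Reachable p q := by
  obtain ⟨W⟩ := h
  refine ⟨W.transfer _ fun f hf => ?_⟩
  have hfG : f ∈ G.edgeSet := by
    have := W.edges_subset_edgeSet hf
    rw [SimpleGraph.edgeSet_deleteEdges] at this
    exact this.1
  rw [SimpleGraph.edgeSet_deleteEdges]
  refine ⟨hfG, ?_⟩
  intro hfe
  rw [Set.mem_singleton_iff] at hfe
  subst hfe
  induction f with
  | h z₁ z₂ =>
    exact hr z₁ (by simp) ⟨W.takeUntil z₁ (W.fst_mem_support_of_mem_edges hf)⟩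

lemma sym2_eq_iff {a b c d : V} : s(a,b) = s(c,d) ↔ (a = c ∧ b = d) ∨ (a = d ∧ b = c) :=
  Sym2.eq_iff

/-- In a tree, the endpoints of a deleted edge are not reachable from one another. -/
lemma tree_bridge (hT : G.IsTree) {a b : V} (hadj : G.Adj a b) :
    ¬ (G.deleteEdges {s(a,b)}).Reachable a b := by
  have hb := (SimpleGraph.isAcyclic_iff_forall_adj_isBridge.mp hT.IsAcyclic) hadj
  rw [SimpleGraph.isBridge_iff] at hb
  exact hb

end aux3

/-- The message of the ordered pair `(u,v)` of adjacent vertices of a finite weighted tree: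
`Z(u,v) = OPT(T_(u,v)) - OPT(T_(u,v) - v)`, where `T_(u,v)` is the connected component of
`T - {u,v}` containing `v`. -/
noncomputable def Zmsg {V : Type*} [Fintype V] (G : SimpleGraph V) (w : Sym2 V → ℝ)
    (x : V → ℝ) (u v : V) : ℝ :=
  OPT (G.deleteEdges {s(u,v)}) w x {a | (G.deleteEdges {s(u,v)}).Reachable v a} -
    OPT (G.deleteEdges {s(u,v)}) w x ({a | (G.deleteEdges {s(u,v)}).Reachable v a} \ {v})

/-- The graph with the edge `s(a,b)` deleted. -/
def Gd {V : Type*} (G : SimpleGraph V) (a b : V) : SimpleGraph V := G.deleteEdges {s(a,b)}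

/-- The connected component of `b` after deleting the edge `s(a,b)`. -/
def RS {V : Type*} (G : SimpleGraph V) (a b : V) : Set V := {c | (Gd G a b).Reachable b c}

lemma Zmsg_eq {V : Type*} [Fintype V] (G : SimpleGraph V) (w : Sym2 V → ℝ) (x : V → ℝ)
    (u v : V) :
    Zmsg G w x u v = OPT (Gd G u v) w x (RS G u v) - OPT (Gd G u v) w x (RS G u v \ {v}) := rfl

section main
variable {V : Type*} [Fintype V] {G : SimpleGraph V} {w : Sym2 V → ℝ} {x : V → ℝ} {u v u' : V}

lemma mem_RS_self : v ∈ RS G u v := SimpleGraph.Reachable.refl v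

lemma not_mem_RS (hT : G.IsTree) (hadj : G.Adj u v) : u ∉ RS G u v := by
  intro h
  exact tree_bridge hT hadj h.symm

lemma Gd_adj (hadj : G.Adj v u') (hne : u' ≠ u) (hvu : v ≠ u) : (Gd G u v).Adj v u' := by
  rw [Gd, SimpleGraph.deleteEdges_adj]
  refine ⟨hadj, ?_⟩
  rw [Set.mem_singleton_iff, sym2_eq_iff]
  rintro (⟨rfl, -⟩ | ⟨-, rfl⟩)
  · exact hvu rfl
  · exact hne rfl

lemma mem_RS_of_adj (hadj : G.Adj v u') (hne : u' ≠ u) (hvu : v ≠ u) : u' ∈ RS G u v :=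
  (Gd_adj hadj hne hvu).reachable

/-- `v` is not in the component of `u'` after deleting `s(v,u')`. -/
lemma not_mem_RS' (hT : G.IsTree) (hvu' : G.Adj v u') : v ∉ RS G v u' := by
  intro h
  exact tree_bridge hT hvu' h.symm

/-- `u` is not in the component of `u'` after deleting `s(v,u')`. -/
lemma not_mem_RS'' (hT : G.IsTree) (hadj : G.Adj u v) (hvu' : G.Adj v u') (hne : u' ≠ u) :
    u ∉ RS G v u' := by
  intro h
  apply not_mem_RS' hT hvu'
  refine SimpleGraph.Reachable.trans h (SimpleGraph.Adj.reachable ?_)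
  rw [Gd, SimpleGraph.deleteEdges_adj]
  refine ⟨hadj, ?_⟩
  rw [Set.mem_singleton_iff, sym2_eq_iff]
  rintro (⟨rfl, rfl⟩ | ⟨rfl, -⟩)
  · exact hvu'.ne rfl
  · exact hne rfl

/-- The component of `u'` (edge `s(v,u')` deleted) is contained in `RS G u v` minus `v`. -/
lemma RS'_subset (hT : G.IsTree) (hadj : G.Adj u v) (hvu' : G.Adj v u') (hne : u' ≠ u) :
    RS G v u' ⊆ RS G u v \ {v} := by
  intro a ha
  have hu := not_mem_RS'' hT hadj hvu' hne
  have hv := not_mem_RS' hT hvu'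
  have htrans : (Gd G u v).Reachable u' a := by
    refine reach_transfer ha ?_
    intro z hz
    rw [Sym2.mem_iff] at hz
    rcases hz with rfl | rfl
    · exact hu
    · exact hv
  constructor
  · exact ((Gd_adj hvu' hne hadj.ne').reachable).trans htrans
  · rintro rfl
    exact hv ha

lemma RS'_self : u' ∈ RS G v u' := SimpleGraph.Reachable.refl u'

/-- No `Gd G u v`-edges between `RS G v u'` and its complement in `RS G u v \ {v}`. -/
lemma RS'_sep (hT : G.IsTree) (hadj : G.Adj u v) (hvu' : G.Adj v u') (hne : u' ≠ u) :
    ∀ a ∈ RS G v u', ∀ b ∈ (RS G u v \ {v}) \ RS G v u', ¬ (Gd G u v).Adj a b := by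
  intro a ha b hb hab
  apply hb.2
  have haG : G.Adj a b := (G.deleteEdges_le _) hab
  have hanv : a ≠ v := fun h => not_mem_RS' hT hvu' (h ▸ ha)
  have hbnv : b ≠ v := hb.1.2
  have : (Gd G v u').Adj a b := by
    rw [Gd, SimpleGraph.deleteEdges_adj]
    refine ⟨haG, ?_⟩
    rw [Set.mem_singleton_iff, sym2_eq_iff]
    rintro (⟨rfl, -⟩ | ⟨-, rfl⟩)
    · exact hanv rfl
    · exact hbnv rfl
  exact ha.trans this.reachable

/-- Every element of `RS G u v` other than `v` lies in the component of some neighbour. -/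
lemma RS_decomp (hadj : G.Adj u v) {a : V} (ha : a ∈ RS G u v) (hav : a ≠ v) :
    ∃ u', G.Adj v u' ∧ u' ≠ u ∧ a ∈ RS G v u' := by
  obtain ⟨W⟩ := (ha : (Gd G u v).Reachable v a)
  obtain ⟨W', hW'⟩ := W.toPath
  cases W' with
  | nil => exact absurd rfl hav
  | @cons _ b _ h q =>
    have hGb : G.Adj v b := (G.deleteEdges_le _) h
    have hbu : b ≠ u := by
      rintro rfl
      have := (SimpleGraph.deleteEdges_adj.mp h).2
      rw [Set.mem_singleton_iff, Sym2.eq_swap] at this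
      exact this rfl
    refine ⟨b, hGb, hbu, ?_⟩
    have hvq : v ∉ q.support := ((SimpleGraph.Walk.cons_isPath_iff h q).mp hW').2
    refine ⟨q.transfer _ fun f hf => ?_⟩
    have hfG : f ∈ G.edgeSet := by
      have := q.edges_subset_edgeSet hf
      rw [Gd, SimpleGraph.edgeSet_deleteEdges] at this
      exact this.1
    rw [Gd, SimpleGraph.edgeSet_deleteEdges]
    refine ⟨hfG, ?_⟩
    rw [Set.mem_singleton_iff]
    rintro rfl
    exact hvq (q.fst_mem_support_of_mem_edges hf)

end main

section main2
variable {V : Type*} [Fintype V] {G : SimpleGraph V} {w : Sym2 V → ℝ} {x : V → ℝ} {u v u' : V}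

lemma OPT_split (hT : G.IsTree) (hadj : G.Adj u v) (hvu' : G.Adj v u') (hne : u' ≠ u) :
    OPT (Gd G u v) w x (RS G u v \ {v, u'})
      = OPT (Gd G u v) w x (RS G u v \ {v}) - Zmsg G w x v u' := by
  have hsub := RS'_subset hT hadj hvu' hne
  have hdis : Disjoint (RS G v u') ((RS G u v \ {v}) \ RS G v u') :=
    disjoint_sdiff_self_right
  have h1 : RS G u v \ {v} = RS G v u' ∪ ((RS G u v \ {v}) \ RS G v u') :=
    (Set.union_diff_cancel hsub).symm
  have hO1 : OPT (Gd G u v) w x (RS G u v \ {v})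
      = OPT (Gd G u v) w x (RS G v u')
        + OPT (Gd G u v) w x ((RS G u v \ {v}) \ RS G v u') := by
    have := OPT_union (w := w) (x := x) hdis (RS'_sep hT hadj hvu' hne)
    rw [← h1] at this
    exact this
  have h2 : RS G u v \ {v, u'}
      = (RS G v u' \ {u'}) ∪ ((RS G u v \ {v}) \ RS G v u') := by
    ext a
    simp only [Set.mem_diff, Set.mem_union, Set.mem_insert_iff, Set.mem_singleton_iff, not_or]
    constructor
    · rintro ⟨ha, hav, hau⟩
      by_cases hT' : a ∈ RS G v u'
      · exact Or.inl ⟨hT', hau⟩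
      · exact Or.inr ⟨⟨ha, hav⟩, hT'⟩
    · rintro (⟨ha, hau⟩ | ⟨⟨ha, hav⟩, hT'⟩)
      · have := hsub ha
        exact ⟨this.1, this.2, hau⟩
      · refine ⟨ha, hav, ?_⟩
        rintro rfl
        exact hT' RS'_self
  have hO2 : OPT (Gd G u v) w x (RS G u v \ {v, u'})
      = OPT (Gd G u v) w x (RS G v u' \ {u'})
        + OPT (Gd G u v) w x ((RS G u v \ {v}) \ RS G v u') := by
    have := OPT_union (w := w) (x := x) (A := RS G v u' \ {u'})
      (B := (RS G u v \ {v}) \ RS G v u') (hdis.mono_left Set.diff_subset)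
      (fun a ha b hb => RS'_sep hT hadj hvu' hne a ha.1 b hb)
    rw [← h2] at this
    exact this
  have hcongr : ∀ T : Set V, T ⊆ RS G v u' →
      OPT (Gd G u v) w x T = OPT (Gd G v u') w x T := by
    intro T hTs
    apply OPT_congr
    intro e hz
    rw [Gd, Gd, SimpleGraph.edgeSet_deleteEdges, SimpleGraph.edgeSet_deleteEdges]
    have he1 : e ≠ s(u,v) := by
      rintro rfl
      exact (not_mem_RS'' hT hadj hvu' hne) (hTs (hz u (by simp)))
    have he2 : e ≠ s(v,u') := by
      rintro rfl
      exact (not_mem_RS' hT hvu') (hTs (hz v (by simp)))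
    simp [he1, he2]
  have hc1 := hcongr (RS G v u') subset_rfl
  have hc2 := hcongr (RS G v u' \ {u'}) Set.diff_subset
  have hZ : Zmsg G w x v u'
      = OPT (Gd G v u') w x (RS G v u') - OPT (Gd G v u') w x (RS G v u' \ {u'}) :=
    Zmsg_eq G w x v u'
  rw [hO1, hO2, hZ, ← hc1, ← hc2]
  ring

lemma Zmsg_ge_x (hT : G.IsTree) (hadj : G.Adj u v) : x v ≤ Zmsg G w x u v := by
  obtain ⟨M, hM, hw⟩ := exists_optimal (Gd G u v) w x (RS G u v \ {v})
  have hM' : IsMatchingOn (Gd G u v) (RS G u v) M := matching_mono Set.diff_subset hM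
  have hunc : ∀ e ∈ M, v ∉ e := fun e he hv => ((hM.1 e he).2 v hv).2 rfl
  have hwt : MDweight w x (RS G u v) M = x v + MDweight w x (RS G u v \ {v}) M :=
    MDweight_sdiff_singleton mem_RS_self hunc
  have hle := le_OPT (w := w) (x := x) hM'
  rw [hwt, hw] at hle
  rw [Zmsg_eq G w x u v]
  linarith

lemma Zmsg_ge_edge (hT : G.IsTree) (hadj : G.Adj u v) (hvu' : G.Adj v u') (hne : u' ≠ u) :
    w s(v,u') - Zmsg G w x v u' ≤ Zmsg G w x u v := by
  obtain ⟨M, hM, hw⟩ := exists_optimal (Gd G u v) w x (RS G u v \ {v, u'})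
  have hvers : ∀ e ∈ M, ∀ z ∈ e, z ∈ RS G u v \ {v, u'} := fun e he => (hM.1 e he).2
  have hnm : s(v,u') ∉ M := fun h => (hvers _ h v (by simp)).2 (by simp)
  have hu'S : u' ∈ RS G u v := mem_RS_of_adj hvu' hne hadj.ne'
  have hGd : (Gd G u v).Adj v u' := Gd_adj hvu' hne hadj.ne'
  have hmatch : IsMatchingOn (Gd G u v) (RS G u v) (insert s(v,u') M) := by
    constructor
    · intro e he
      rcases Finset.mem_insert.mp he with rfl | he
      · refine ⟨(SimpleGraph.mem_edgeSet _).mpr hGd, ?_⟩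
        intro z hz
        rcases Sym2.mem_iff.mp hz with rfl | rfl
        · exact mem_RS_self
        · exact hu'S
      · exact ⟨(hM.1 e he).1, fun z hz => ((hM.1 e he).2 z hz).1⟩
    · intro e he f hf hef z hze hzf
      rcases Finset.mem_insert.mp he with he' | he'
      · rcases Finset.mem_insert.mp hf with hf' | hf'
        · exact absurd (he'.trans hf'.symm) hef
        · have hz' : z = v ∨ z = u' := Sym2.mem_iff.mp (he' ▸ hze)
          rcases hz' with rfl | rfl
          · exact (hvers f hf' _ hzf).2 (by simp)
          · exact (hvers f hf' _ hzf).2 (by simp)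
      · rcases Finset.mem_insert.mp hf with hf' | hf'
        · have hz' : z = v ∨ z = u' := Sym2.mem_iff.mp (hf' ▸ hzf)
          rcases hz' with rfl | rfl
          · exact (hvers e he' _ hze).2 (by simp)
          · exact (hvers e he' _ hze).2 (by simp)
        · exact hM.2 e he' f hf' hef z hze hzf
  have hwt : MDweight w x (RS G u v) (insert s(v,u') M)
      = w s(v,u') + MDweight w x (RS G u v \ {v, u'}) M :=
    MDweight_insert_edge hvu'.ne mem_RS_self hu'S hnm
  have hle := le_OPT (w := w) (x := x) hmatch
  rw [hwt, hw, OPT_split hT hadj hvu' hne] at hle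
  rw [Zmsg_eq G w x u v]
  linarith

lemma Zmsg_le (hT : G.IsTree) (hadj : G.Adj u v) :
    Zmsg G w x u v ≤ x v ∨ ∃ u', G.Adj v u' ∧ u' ≠ u ∧
      Zmsg G w x u v ≤ w s(v,u') - Zmsg G w x v u' := by
  obtain ⟨M, hM, hw⟩ := exists_optimal (Gd G u v) w x (RS G u v)
  by_cases hc : ∀ e ∈ M, v ∉ e
  · left
    have hM' : IsMatchingOn (Gd G u v) (RS G u v \ {v}) M := by
      refine matching_shrink hM Set.diff_subset fun e he z hz => ?_
      refine ⟨(hM.1 e he).2 z hz, ?_⟩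
      rintro rfl
      exact hc e he hz
    have hwt : MDweight w x (RS G u v) M = x v + MDweight w x (RS G u v \ {v}) M :=
      MDweight_sdiff_singleton mem_RS_self hc
    have hle := le_OPT (w := w) (x := x) hM'
    rw [Zmsg_eq G w x u v, ← hw, hwt]
    linarith
  · push_neg at hc
    obtain ⟨e₀, he₀, hve₀⟩ := hc
    set b := Sym2.Mem.other hve₀ with hbdef
    have hspec : s(v, b) = e₀ := Sym2.other_spec hve₀
    have hGdb : (Gd G u v).Adj v b := (SimpleGraph.mem_edgeSet _).mp (hspec ▸ (hM.1 e₀ he₀).1)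
    have hGb : G.Adj v b := (G.deleteEdges_le _) hGdb
    have hbu : b ≠ u := by
      rintro rfl
      have := (SimpleGraph.deleteEdges_adj.mp hGdb).2
      rw [Set.mem_singleton_iff, Sym2.eq_swap] at this
      exact this rfl
    have hbS : b ∈ RS G u v := hGdb.reachable
    have hbe₀ : b ∈ e₀ := hspec ▸ (by simp)
    have huncM' : ∀ e ∈ M.erase e₀, v ∉ e ∧ b ∉ e := by
      intro e he
      have hne : e₀ ≠ e := (Finset.ne_of_mem_erase he).symm
      have heM : e ∈ M := Finset.mem_of_mem_erase he
      exact ⟨hM.2 e₀ he₀ e heM hne v hve₀, hM.2 e₀ he₀ e heM hne b hbe₀⟩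
    have hM'match : IsMatchingOn (Gd G u v) (RS G u v \ {v, b}) (M.erase e₀) := by
      refine matching_shrink (matching_subset hM (Finset.erase_subset _ _))
        Set.diff_subset fun e he z hz => ?_
      refine ⟨(hM.1 e (Finset.mem_of_mem_erase he)).2 z hz, ?_⟩
      simp only [Set.mem_insert_iff, Set.mem_singleton_iff, not_or]
      constructor
      · rintro rfl; exact (huncM' e he).1 hz
      · rintro rfl; exact (huncM' e he).2 hz
    have hins : insert s(v,b) (M.erase e₀) = M := by
      rw [hspec]; exact Finset.insert_erase he₀
    have hwt : MDweight w x (RS G u v) M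
        = w s(v,b) + MDweight w x (RS G u v \ {v, b}) (M.erase e₀) := by
      conv_lhs => rw [← hins]
      exact MDweight_insert_edge (M := M.erase e₀) hGb.ne mem_RS_self hbS (by rw [hspec]; exact Finset.notMem_erase _ _)
    refine Or.inr ⟨b, hGb, hbu, ?_⟩
    have hle := le_OPT (w := w) (x := x) hM'match
    rw [OPT_split hT hadj hGb hbu] at hle
    rw [Zmsg_eq G w x u v, ← hw, hwt]
    linarith

end main2


/-- On a finite weighted tree, the messages satisfy the recursion
`Z(u,v) = max (x v) (max_{u' ∼ v, u' ≠ u} (w(v,u') - Z(v,u')))`, the inner maximum over an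
empty set being `-∞` (computed in `EReal`, so that `Z(u,v) = x v` when `u` is the only
neighbour of `v`). -/
theorem stmt3 {V : Type*} [Fintype V] (G : SimpleGraph V) (hT : G.IsTree)
    (w : Sym2 V → ℝ) (x : V → ℝ) :
    ∀ u v, G.Adj u v →
      ((Zmsg G w x u v : ℝ) : EReal) =
        max ((x v : ℝ) : EReal)
          (sSup {r : EReal | ∃ u', G.Adj v u' ∧ u' ≠ u ∧
            r = ((w s(v,u') : ℝ) : EReal) - ((Zmsg G w x v u' : ℝ) : EReal)}) := by

  intro u v hadj
  apply le_antisymm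
  · rcases Zmsg_le hT hadj with h | ⟨u', hvu', hne, h⟩
    · exact le_trans (EReal.coe_le_coe_iff.mpr h) (le_max_left _ _)
    · refine le_trans ?_ (le_max_right _ _)
      refine le_trans (EReal.coe_le_coe_iff.mpr h) ?_
      rw [EReal.coe_sub]
      exact le_sSup ⟨u', hvu', hne, rfl⟩
  · apply max_le
    · exact EReal.coe_le_coe_iff.mpr (Zmsg_ge_x hT hadj)
    · apply sSup_le
      rintro r ⟨u', hvu', hne, rfl⟩
      rw [← EReal.coe_sub]
      exact EReal.coe_le_coe_iff.mpr (Zmsg_ge_edge hT hadj hvu' hne)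
end

section
/- Let (T,o) be a locally finite rooted tree with edge weights w and vertex weights x, and let H ≥ 1. If Z and Z' are H-message families on B_H(T,o) whose boundary values satisfy b(u,v) ≤ b'(u,v) for every boundary pair (u,v), then for every neighbour v of the root o: Z(o,v) ≤ Z'(o,v) when H is odd, and Z(o,v) ≥ Z'(o,v) when H is even. In other words, the messages at the root depend monotonically on the boundary conditions, increasingly for odd H and decreasingly for even H. -/
/-- `Z` is an `H`-message family on the ball `B_H(T,o)` with boundary values `b`:
on boundary pairs (ordered pairs `(u,v)` of adjacent vertices of the ball with `v` at
distance exactly `H` from `o`), `Z(u,v) = b(u,v)`, and on every other ordered pair of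
adjacent vertices of the ball, `Z(u,v) = max (x v) (max_{u' ∼ v, u' ≠ u} (w(v,u') - Z(v,u')))`
(computed in `EReal`, with the conventions `w - (+∞) = -∞` and empty maximum `= -∞`). -/
def IsMsgFamily {V : Type*} (G : SimpleGraph V) (w : Sym2 V → ℝ) (x : V → ℝ) (o : V) (H : ℕ)
    (b : V → V → EReal) (Z : V → V → EReal) : Prop :=
  (∀ u v, G.Adj u v → G.dist o u ≤ H → G.dist o v = H → Z u v = b u v) ∧
  (∀ u v, G.Adj u v → G.dist o u ≤ H → G.dist o v < H →
    Z u v = max ((x v : ℝ) : EReal)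
      (sSup {r : EReal | ∃ u', G.Adj v u' ∧ u' ≠ u ∧ G.dist o u' ≤ H ∧
        r = ((w s(v,u') : ℝ) : EReal) - Z v u'}))

namespace StmtSeven

variable {V : Type*} {G : SimpleGraph V}

/-- A vertex farther from `o` than `u` is not on a shortest `o`–`u` walk. -/
lemma notMem_support {o u v : V} (p : G.Walk o u) (hp : p.length = G.dist o u)
    (hlt : G.dist o u < G.dist o v) : v ∉ p.support := by
  classical
  intro h
  have h1 : G.dist o v ≤ (p.takeUntil v h).length := SimpleGraph.dist_le _
  have h2 := SimpleGraph.Walk.length_takeUntil_le p h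
  omega

lemma concat_isPath {o u v : V} {p : G.Walk o u} (hp : p.IsPath) (h : G.Adj u v)
    (hv : v ∉ p.support) : (p.concat h).IsPath := by
  rw [← SimpleGraph.Walk.isPath_reverse_iff, SimpleGraph.Walk.reverse_concat]
  refine hp.reverse.cons ?_
  simpa [SimpleGraph.Walk.support_reverse] using hv

/-- In a tree, adjacent vertices have different distances from `o`. -/
lemma adj_dist_ne (hT : G.IsTree) {o u v : V} (h : G.Adj u v) :
    G.dist o u ≠ G.dist o v := by
  classical
  intro heq
  obtain ⟨p, hp, hpl⟩ := hT.isConnected.exists_path_of_dist o u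
  have hv : v ∉ p.support := by
    intro hmem
    have h1 : G.dist o v ≤ (p.takeUntil v hmem).length := SimpleGraph.dist_le _
    have h2 : (p.takeUntil v hmem).length + (p.dropUntil v hmem).length = p.length := by
      conv_rhs => rw [← p.take_spec hmem]
      rw [SimpleGraph.Walk.length_append]
    have h3 : (p.dropUntil v hmem).length = 0 := by omega
    exact h.ne (SimpleGraph.Walk.eq_of_length_eq_zero h3).symm
  obtain ⟨q, hq, hql⟩ := hT.isConnected.exists_path_of_dist o v
  obtain ⟨P, -, hun⟩ := hT.existsUnique_path o v
  have heqw : p.concat h = q := (hun _ (concat_isPath hp h hv)).trans (hun _ hq).symm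
  have := congrArg SimpleGraph.Walk.length heqw
  simp [hpl, hql, heq] at this

/-- In a tree, the parent of a vertex is unique. -/
lemma parent_unique (hT : G.IsTree) {o u u' v : V} (h : G.Adj u v) (h' : G.Adj u' v)
    (hd : G.dist o u + 1 = G.dist o v) (hd' : G.dist o u' + 1 = G.dist o v) : u = u' := by
  obtain ⟨p, hp, hpl⟩ := hT.isConnected.exists_path_of_dist o u
  obtain ⟨p', hp', hpl'⟩ := hT.isConnected.exists_path_of_dist o u'
  have hv : v ∉ p.support := notMem_support p hpl (by omega)
  have hv' : v ∉ p'.support := notMem_support p' hpl' (by omega)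
  obtain ⟨P, -, hun⟩ := hT.existsUnique_path o v
  have heqw : p.concat h = p'.concat h' :=
    (hun _ (concat_isPath hp h hv)).trans (hun _ (concat_isPath hp' h' hv')).symm
  have := congrArg (fun q => q.reverse.getVert 1) heqw
  simpa [SimpleGraph.Walk.reverse_concat, SimpleGraph.Walk.getVert] using this

/-- In a tree, every neighbour of `v` other than its parent is a child. -/
lemma child_dist (hT : G.IsTree) {o u u' v : V} (h : G.Adj u v)
    (hd : G.dist o u + 1 = G.dist o v) (h' : G.Adj v u') (hne : u' ≠ u) :
    G.dist o u' = G.dist o v + 1 := by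
  have hvu' : G.dist v u' = 1 := SimpleGraph.dist_eq_one_iff_adj.mpr h'
  have ht1 : G.dist o u' ≤ G.dist o v + G.dist v u' := hT.isConnected.dist_triangle
  have ht2 : G.dist o v ≤ G.dist o u' + G.dist u' v := hT.isConnected.dist_triangle
  have hu'v : G.dist u' v = 1 := SimpleGraph.dist_eq_one_iff_adj.mpr h'.symm
  have hne1 : G.dist o u' ≠ G.dist o v := adj_dist_ne hT h'.symm
  have hne2 : G.dist o u' + 1 ≠ G.dist o v := fun hc =>
    hne (parent_unique hT h'.symm h hc hd)
  omega

end StmtSeven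

/-- On a locally finite rooted weighted tree, the messages at the root depend monotonically
on the boundary conditions: if `Z` and `Z'` are `H`-message families with boundary values
`b ≤ b'` pointwise, then for every neighbour `v` of the root, `Z(o,v) ≤ Z'(o,v)` when `H` is
odd and `Z(o,v) ≥ Z'(o,v)` when `H` is even. -/
theorem stmt7 {V : Type*} (G : SimpleGraph V) (hT : G.IsTree) (hlf : G.LocallyFinite)
    (w : Sym2 V → ℝ) (x : V → ℝ) (o : V) (H : ℕ) (hH : 1 ≤ H)
    (b b' Z Z' : V → V → EReal)
    (hZ : IsMsgFamily G w x o H b Z) (hZ' : IsMsgFamily G w x o H b' Z')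
    (hbb : ∀ u v, G.Adj u v → G.dist o u ≤ H → G.dist o v = H → b u v ≤ b' u v) :
    ∀ v, G.Adj o v → (Odd H → Z o v ≤ Z' o v) ∧ (Even H → Z' o v ≤ Z o v) := by
  have key : ∀ k u v, G.Adj u v → G.dist o u + 1 = G.dist o v → G.dist o v + k = H →
      (Even k → Z u v ≤ Z' u v) ∧ (Odd k → Z' u v ≤ Z u v) := by
    intro k
    induction k with
    | zero =>
      intro u v huv hd hk
      refine ⟨fun _ => ?_, fun hodd => absurd hodd (by simp)⟩
      rw [hZ.1 u v huv (by omega) (by omega), hZ'.1 u v huv (by omega) (by omega)]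
      exact hbb u v huv (by omega) (by omega)
    | succ k ih =>
      intro u v huv hd hk
      rw [hZ.2 u v huv (by omega) (by omega), hZ'.2 u v huv (by omega) (by omega)]
      constructor
      · intro heven
        have hoddk : Odd k := by
          rcases Nat.even_or_odd k with hk' | hk'
          · exact absurd (hk'.add_one) (by simpa using heven)
          · exact hk'
        refine max_le_max le_rfl (sSup_le_sSup_of_isCofinalFor ?_)
        rintro r ⟨u', hadj, hne, hle, rfl⟩
        refine ⟨_, ⟨u', hadj, hne, hle, rfl⟩, ?_⟩
        have hdu' : G.dist o u' = G.dist o v + 1 := StmtSeven.child_dist hT huv hd hadj hne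
        have := (ih v u' hadj (by omega) (by omega)).2 hoddk
        exact EReal.sub_le_sub le_rfl this
      · intro hodd
        have hevenk : Even k := by
          rcases Nat.even_or_odd k with hk' | hk'
          · exact hk'
          · exact absurd (hk'.add_one) (by simpa using hodd)
        refine max_le_max le_rfl (sSup_le_sSup_of_isCofinalFor ?_)
        rintro r ⟨u', hadj, hne, hle, rfl⟩
        refine ⟨_, ⟨u', hadj, hne, hle, rfl⟩, ?_⟩
        have hdu' : G.dist o u' = G.dist o v + 1 := StmtSeven.child_dist hT huv hd hadj hne
        have := (ih v u' hadj (by omega) (by omega)).1 hevenk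
        exact EReal.sub_le_sub le_rfl this
  intro v hov
  have hd1 : G.dist o v = 1 := SimpleGraph.dist_eq_one_iff_adj.mpr hov
  have hd0 : G.dist o o = 0 := SimpleGraph.dist_self
  have hmain := key (H - 1) o v hov (by omega) (by omega)
  constructor
  · intro hodd
    exact hmain.1 (Nat.Odd.sub_odd hodd odd_one)
  · intro heven
    exact hmain.2 (Nat.Even.sub_odd hH heven odd_one)
end

section
/- Let (T,o) be a locally finite rooted tree with edge weights w and vertex weights x, let m ∈ ℝ, and assume x(v) ≥ m for every vertex v. For H ≥ 1, let Z_m^H and Z_∞^H denote the H-message families on B_H(T,o) whose boundary values are all equal to m and all equal to +∞, respectively. Fix a neighbour v of o and let I_H ⊆ ℝ ∪ {+∞} be the closed interval with endpoints Z_m^H(o,v) and Z_∞^H(o,v). Then: (a) for every H-message family Z whose boundary values all lie in [m, +∞], one has Z(o,v) ∈ I_H; and (b) the intervals are nested: I_{H+1} ⊆ I_H for every H ≥ 1. -/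
section Aux

variable {V : Type*} {G : SimpleGraph V}

lemma exists_shortest_path' (hc : G.Connected) (u v : V) :
    ∃ p : G.Walk u v, p.IsPath ∧ p.length = G.dist u v := by
  classical
  obtain ⟨p0, hp0⟩ := hc.exists_walk_length_eq_dist u v
  refine ⟨p0.bypass, p0.bypass_isPath, le_antisymm ?_ (SimpleGraph.dist_le _)⟩
  calc p0.bypass.length ≤ p0.length := p0.length_bypass_le
    _ = G.dist u v := hp0

lemma dist_le_of_mem_support' {u o v : V} (p : G.Walk u o) (hv : v ∈ p.support) :
    G.dist v o ≤ p.length := by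
  classical
  have := congrArg SimpleGraph.Walk.length (p.take_spec hv)
  rw [SimpleGraph.Walk.length_append] at this
  have h2 : G.dist v o ≤ (p.dropUntil v hv).length := SimpleGraph.dist_le _
  omega

lemma dist_lt_of_mem_support' {u o v : V} (p : G.Walk u o) (hv : v ∈ p.support)
    (hne : v ≠ u) : G.dist v o < p.length := by
  classical
  have := congrArg SimpleGraph.Walk.length (p.take_spec hv)
  rw [SimpleGraph.Walk.length_append] at this
  have h1 : (p.takeUntil v hv).length ≠ 0 := fun h =>
    hne (SimpleGraph.Walk.eq_of_length_eq_zero h).symm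
  have h2 : G.dist v o ≤ (p.dropUntil v hv).length := SimpleGraph.dist_le _
  omega

/-- In a tree, adjacent vertices are at different distances from any root. -/
lemma tree_adj_dist_ne' (hT : G.IsTree) {o u v : V} (h : G.Adj u v) :
    G.dist o u ≠ G.dist o v := by
  intro heq
  obtain ⟨p, hp, hl⟩ := exists_shortest_path' hT.isConnected u o
  have duo : G.dist u o = G.dist o u := SimpleGraph.dist_comm
  have dvo : G.dist v o = G.dist o v := SimpleGraph.dist_comm
  have hvp : v ∉ p.support := by
    intro hv
    have := dist_lt_of_mem_support' p hv (fun e => h.ne e.symm)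
    omega
  obtain ⟨q, hq, hql⟩ := exists_shortest_path' hT.isConnected v o
  have hcons : (SimpleGraph.Walk.cons h.symm p).IsPath := hp.cons hvp
  have heq2 := (hT.existsUnique_path v o).unique hcons hq
  have hlen := congrArg SimpleGraph.Walk.length heq2
  rw [SimpleGraph.Walk.length_cons] at hlen
  omega

/-- In a tree, a vertex has a unique neighbour closer to the root. -/
lemma tree_unique_parent' (hT : G.IsTree) {o u u' v : V} (h : G.Adj u v) (h' : G.Adj u' v)
    (hd : G.dist o u + 1 = G.dist o v) (hd' : G.dist o u' + 1 = G.dist o v) : u = u' := by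
  obtain ⟨p, hp, hl⟩ := exists_shortest_path' hT.isConnected u o
  obtain ⟨p', hp', hl'⟩ := exists_shortest_path' hT.isConnected u' o
  have duo : G.dist u o = G.dist o u := SimpleGraph.dist_comm
  have duo' : G.dist u' o = G.dist o u' := SimpleGraph.dist_comm
  have dvo : G.dist v o = G.dist o v := SimpleGraph.dist_comm
  have hvp : v ∉ p.support := fun hv => by
    have := dist_le_of_mem_support' p hv; omega
  have hvp' : v ∉ p'.support := fun hv => by
    have := dist_le_of_mem_support' p' hv; omega
  have hcons : (SimpleGraph.Walk.cons h.symm p).IsPath := hp.cons hvp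
  have hcons' : (SimpleGraph.Walk.cons h'.symm p').IsPath := hp'.cons hvp'
  have heq := (hT.existsUnique_path v o).unique hcons hcons'
  have hsup := congrArg SimpleGraph.Walk.support heq
  rw [SimpleGraph.Walk.support_cons, SimpleGraph.Walk.support_cons,
    p.support_eq_cons, p'.support_eq_cons] at hsup
  simp only [List.cons.injEq] at hsup
  exact hsup.2.1

/-- termwise comparison of the sup sets appearing in the message recursion -/
lemma sSup_msg_le' {w : Sym2 V → ℝ} {o u v : V} {H : ℕ} {A B : V → V → EReal}
    (hAB : ∀ u', G.Adj v u' → u' ≠ u → G.dist o u' ≤ H → B v u' ≤ A v u') :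
    sSup {r : EReal | ∃ u', G.Adj v u' ∧ u' ≠ u ∧ G.dist o u' ≤ H ∧
        r = ((w s(v,u') : ℝ) : EReal) - A v u'} ≤
    sSup {r : EReal | ∃ u', G.Adj v u' ∧ u' ≠ u ∧ G.dist o u' ≤ H ∧
        r = ((w s(v,u') : ℝ) : EReal) - B v u'} := by
  apply sSup_le
  rintro r ⟨u', h1, h2, h3, rfl⟩
  exact le_sSup_of_le ⟨u', h1, h2, h3, rfl⟩ (EReal.sub_le_sub le_rfl (hAB u' h1 h2 h3))

/-- The key alternating bracketing: a message family with boundary values in `[m,∞]`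
is squeezed between the constant-`m` and constant-`∞` families, with sides depending
on the parity of the distance to the boundary. -/
lemma key_bracket' (hT : G.IsTree) {w : Sym2 V → ℝ} {x : V → ℝ} {o : V} {m : ℝ} {H : ℕ}
    {b Z ZM ZI : V → V → EReal}
    (hb : ∀ u u', G.Adj u u' → G.dist o u ≤ H → G.dist o u' = H → ((m : ℝ) : EReal) ≤ b u u')
    (hZ : IsMsgFamily G w x o H b Z)
    (hm : IsMsgFamily G w x o H (fun _ _ => ((m : ℝ) : EReal)) ZM)
    (hi : IsMsgFamily G w x o H (fun _ _ => (⊤ : EReal)) ZI) :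
    ∀ k u v, G.Adj u v → G.dist o u + 1 = G.dist o v → G.dist o v + k = H →
      (Even k → ZM u v ≤ Z u v ∧ Z u v ≤ ZI u v) ∧
      (¬ Even k → ZI u v ≤ Z u v ∧ Z u v ≤ ZM u v) := by
  intro k
  induction k with
  | zero =>
    intro u v hadj hd hk
    have hu : G.dist o u ≤ H := by omega
    have hv : G.dist o v = H := by omega
    rw [hZ.1 u v hadj hu hv, hm.1 u v hadj hu hv, hi.1 u v hadj hu hv]
    exact ⟨fun _ => ⟨hb u v hadj hu hv, le_top⟩, fun h => absurd Even.zero h⟩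
  | succ k ih =>
    intro u v hadj hd hk
    have hu : G.dist o u ≤ H := by omega
    have hv : G.dist o v < H := by omega
    have hchild : ∀ u', G.Adj v u' → u' ≠ u →
        G.dist o v + 1 = G.dist o u' ∧ G.dist o u' + k = H := by
      intro u' h1 h2
      have e1 : G.dist v u' = 1 := SimpleGraph.dist_eq_one_iff_adj.mpr h1
      have t1 : G.dist o u' ≤ G.dist o v + G.dist v u' := hT.isConnected.dist_triangle
      have e2 : G.dist u' v = 1 := SimpleGraph.dist_eq_one_iff_adj.mpr h1.symm
      have t2 : G.dist o v ≤ G.dist o u' + G.dist u' v := hT.isConnected.dist_triangle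
      have hne : G.dist o v ≠ G.dist o u' := tree_adj_dist_ne' hT h1
      have hnp : ¬ (G.dist o u' + 1 = G.dist o v) := fun hpar =>
        h2 (tree_unique_parent' hT h1.symm hadj hpar hd)
      omega
    have hZe := hZ.2 u v hadj hu hv
    have hme := hm.2 u v hadj hu hv
    have hie := hi.2 u v hadj hu hv
    constructor
    · intro hek
      have hok : ¬ Even k := by
        rw [Nat.even_add_one] at hek; exact hek
      have low : ∀ u', G.Adj v u' → u' ≠ u → G.dist o u' ≤ H → Z v u' ≤ ZM v u' := by
        intro u' h1 h2 _
        obtain ⟨c1, c2⟩ := hchild u' h1 h2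
        exact ((ih v u' h1 c1 c2).2 hok).2
      have high : ∀ u', G.Adj v u' → u' ≠ u → G.dist o u' ≤ H → ZI v u' ≤ Z v u' := by
        intro u' h1 h2 _
        obtain ⟨c1, c2⟩ := hchild u' h1 h2
        exact ((ih v u' h1 c1 c2).2 hok).1
      constructor
      · rw [hZe, hme]
        exact max_le_max le_rfl (sSup_msg_le' low)
      · rw [hZe, hie]
        exact max_le_max le_rfl (sSup_msg_le' high)
    · intro hek
      have hok : Even k := by
        rw [Nat.even_add_one, not_not] at hek; exact hek
      have low : ∀ u', G.Adj v u' → u' ≠ u → G.dist o u' ≤ H → Z v u' ≤ ZI v u' := by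
        intro u' h1 h2 _
        obtain ⟨c1, c2⟩ := hchild u' h1 h2
        exact ((ih v u' h1 c1 c2).1 hok).2
      have high : ∀ u', G.Adj v u' → u' ≠ u → G.dist o u' ≤ H → ZM v u' ≤ Z v u' := by
        intro u' h1 h2 _
        obtain ⟨c1, c2⟩ := hchild u' h1 h2
        exact ((ih v u' h1 c1 c2).1 hok).1
      constructor
      · rw [hZe, hie]
        exact max_le_max le_rfl (sSup_msg_le' low)
      · rw [hZe, hme]
        exact max_le_max le_rfl (sSup_msg_le' high)

/-- An `(H+1)`-message family, restricted to the ball of radius `H`, is an `H`-message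
family with boundary values given by its own values at distance `H`. -/
lemma msg_restrict' (hc : G.Connected) {w : Sym2 V → ℝ} {x : V → ℝ} {o : V} {H : ℕ}
    {b' Z : V → V → EReal} (hZ : IsMsgFamily G w x o (H + 1) b' Z) :
    IsMsgFamily G w x o H (fun u v => Z u v) Z := by
  constructor
  · intro u v _ _ _; rfl
  · intro u v hadj hu hv
    have hrec := hZ.2 u v hadj (by omega) (by omega)
    rw [hrec]
    congr 2
    ext r
    constructor
    · rintro ⟨u', h1, h2, _, rfl⟩
      refine ⟨u', h1, h2, ?_, rfl⟩
      have e1 : G.dist v u' = 1 := SimpleGraph.dist_eq_one_iff_adj.mpr h1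
      have t1 : G.dist o u' ≤ G.dist o v + G.dist v u' := hc.dist_triangle
      omega
    · rintro ⟨u', h1, h2, h3, rfl⟩
      exact ⟨u', h1, h2, by omega, rfl⟩

/-- The values of an `(H+1)`-message family at distance exactly `H` are at least `m`
when all vertex weights are at least `m`. -/
lemma msg_boundary_ge' {w : Sym2 V → ℝ} {x : V → ℝ} {o : V} {m : ℝ} {H : ℕ}
    {b' Z : V → V → EReal} (hx : ∀ v, m ≤ x v) (hZ : IsMsgFamily G w x o (H + 1) b' Z) :
    ∀ u u', G.Adj u u' → G.dist o u ≤ H → G.dist o u' = H → ((m : ℝ) : EReal) ≤ Z u u' := by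
  intro u u' hadj hu hv
  have hrec := hZ.2 u u' hadj (by omega) (by omega)
  rw [hrec]
  refine le_trans ?_ (le_max_left _ _)
  exact_mod_cast hx u'

end Aux

/-- On a locally finite rooted weighted tree with all vertex weights `≥ m`, let `Z_m^H` and
`Z_∞^H` be the `H`-message families with constant boundary values `m` and `+∞` respectively,
and let `I_H` be the closed interval with endpoints `Z_m^H(o,v)` and `Z_∞^H(o,v)` for a fixed
neighbour `v` of the root. Then (a) every `H`-message family whose boundary values lie in
`[m,+∞]` has `Z(o,v) ∈ I_H`, and (b) the intervals are nested: `I_{H+1} ⊆ I_H`. -/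
theorem stmt8 {V : Type*} (G : SimpleGraph V) (hT : G.IsTree) (hlf : G.LocallyFinite)
    (w : Sym2 V → ℝ) (x : V → ℝ) (o : V) (m : ℝ) (hx : ∀ v, m ≤ x v)
    (Zm Zi : ℕ → V → V → EReal)
    (hZm : ∀ H, 1 ≤ H → IsMsgFamily G w x o H (fun _ _ => ((m : ℝ) : EReal)) (Zm H))
    (hZi : ∀ H, 1 ≤ H → IsMsgFamily G w x o H (fun _ _ => (⊤ : EReal)) (Zi H)) :
    ∀ v, G.Adj o v → ∀ H, 1 ≤ H →
      ((∀ b Z : V → V → EReal,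
          (∀ u u', G.Adj u u' → G.dist o u ≤ H → G.dist o u' = H →
            ((m : ℝ) : EReal) ≤ b u u') →
          IsMsgFamily G w x o H b Z →
          Z o v ∈ Set.Icc (min (Zm H o v) (Zi H o v)) (max (Zm H o v) (Zi H o v))) ∧
        Set.Icc (min (Zm (H+1) o v) (Zi (H+1) o v)) (max (Zm (H+1) o v) (Zi (H+1) o v)) ⊆
          Set.Icc (min (Zm H o v) (Zi H o v)) (max (Zm H o v) (Zi H o v))) := by
  intro v hov H hH
  have hdo : G.dist o o = 0 := SimpleGraph.dist_self
  have hdv : G.dist o v = 1 := SimpleGraph.dist_eq_one_iff_adj.mpr hov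
  have parta : ∀ b Z : V → V → EReal,
      (∀ u u', G.Adj u u' → G.dist o u ≤ H → G.dist o u' = H →
        ((m : ℝ) : EReal) ≤ b u u') →
      IsMsgFamily G w x o H b Z →
      Z o v ∈ Set.Icc (min (Zm H o v) (Zi H o v)) (max (Zm H o v) (Zi H o v)) := by
    intro b Z hb hZ
    have hk : G.dist o v + (H - 1) = H := by omega
    have hbr := key_bracket' hT hb hZ (hZm H hH) (hZi H hH) (H - 1) o v hov (by omega) hk
    rcases Nat.even_or_odd (H - 1) with he | ho
    · obtain ⟨h1, h2⟩ := hbr.1 he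
      exact ⟨le_trans (min_le_left _ _) h1, le_trans h2 (le_max_right _ _)⟩
    · obtain ⟨h1, h2⟩ := hbr.2 (Nat.not_even_iff_odd.mpr ho)
      exact ⟨le_trans (min_le_right _ _) h1, le_trans h2 (le_max_left _ _)⟩
  refine ⟨parta, ?_⟩
  have hZm1 := hZm (H + 1) (by omega)
  have hZi1 := hZi (H + 1) (by omega)
  have hm_mem := parta (fun u u' => Zm (H+1) u u') (Zm (H+1))
    (msg_boundary_ge' hx hZm1) (msg_restrict' hT.isConnected hZm1)
  have hi_mem := parta (fun u u' => Zi (H+1) u u') (Zi (H+1))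
    (msg_boundary_ge' hx hZi1) (msg_restrict' hT.isConnected hZi1)
  exact Set.Icc_subset_Icc (le_min hm_mem.1 hi_mem.1) (max_le hm_mem.2 hi_mem.2)
end

section
/- Let m ∈ ℝ. Let ξ be a probability measure on ℝ with cumulative distribution function h_X satisfying ξ((−∞,m)) = 0 and h_X(t) > 0 for every t > m. Let ω be an atomless probability measure on ℝ. Let π̂ be a probability measure on ℕ₀ with π̂({0}) < 1, so that its probability generating function φ̂ is strictly increasing on [0,1] with inverse φ̂^{-1} : [φ̂(0), 1] → [0,1]; set F(u) := 1 − φ̂^{-1}(u). Let ζ_+ and ζ_- be probability measures on ℝ with cumulative distribution functions h_+ and h_- satisfying, for all t ∈ ℝ, h_+(t) = h_X(t) · φ̂( 1 − ∫ h_-(w − t) dω(w) ) and h_-(t) = h_X(t) · φ̂( 1 − ∫ h_+(w − t) dω(w) ). Then ∫ F( h_+(t) / h_X(t) ) dζ_+(t) = ∫ F( h_-(t) / h_X(t) ) dζ_-(t), where both integrands are well defined ζ_±-almost everywhere (indeed h_± ≤ h_X, so ζ_± assign no mass to the set where h_X vanishes, and the ratios lie in [φ̂(0), 1] wherever h_X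 > 0). -/
open MeasureTheory

/-- The map `t ↦ ζ (Iic t)` is monotone, hence measurable. -/
lemma stmt11_cdf_meas (ζ : Measure ℝ) : Measurable fun t : ℝ => ζ (Set.Iic t) := by
  have hmono : Monotone fun t : ℝ => ζ (Set.Iic t) :=
    fun a b hab => measure_mono (Set.Iic_subset_Iic.2 hab)
  exact hmono.measurable

/-- If the cdf of `ζ` vanishes wherever the cdf of `ξ` vanishes, and the cdf of `ξ` is
positive above `m` and vanishes below `m`, then `ζ` gives no mass to the vanishing set. -/
lemma stmt11_null_aux (m : ℝ) (ξ ζ : Measure ℝ)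
    (hξsupp : ξ (Set.Iio m) = 0)
    (hXpos : ∀ t, m < t → ξ (Set.Iic t) ≠ 0)
    (h : ∀ t, ξ (Set.Iic t) = 0 → ζ (Set.Iic t) = 0) :
    ζ {t | ξ (Set.Iic t) = 0} = 0 := by
  have hlt : ∀ t : ℝ, t < m → ξ (Set.Iic t) = 0 := fun t ht =>
    measure_mono_null (fun x hx => lt_of_le_of_lt hx ht) hξsupp
  have hiio : ζ (Set.Iio m) = 0 := by
    have hcov : Set.Iio m ⊆ ⋃ n : ℕ, Set.Iic (m - 1 / (n + 1)) := by
      intro t ht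
      obtain ⟨n, hn⟩ := exists_nat_one_div_lt (K := ℝ) (sub_pos.2 ht)
      exact Set.mem_iUnion.2 ⟨n, by simp only [Set.mem_Iic]; linarith⟩
    refine measure_mono_null hcov (le_antisymm (le_trans (measure_iUnion_le _) ?_) (zero_le))
    have hz : ∀ n : ℕ, ζ (Set.Iic (m - 1 / (n + 1))) = 0 := by
      intro n
      refine h _ (hlt _ ?_)
      have : (0:ℝ) < 1 / ((n:ℝ) + 1) := by positivity
      linarith
    simpa [one_div] using fun n => hz n
  have hsub : {t | ξ (Set.Iic t) = 0} ⊆ Set.Iio m ∪ ({m} ∩ {t | ξ (Set.Iic t) = 0}) := by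
    intro t ht
    rcases lt_trichotomy t m with h1 | h1 | h1
    · exact Or.inl h1
    · exact Or.inr ⟨by simp [h1], ht⟩
    · exact absurd ht (hXpos t h1)
  refine measure_mono_null hsub (le_antisymm (le_trans (measure_union_le _ _) ?_) (zero_le))
  rw [hiio]
  by_cases hm : ξ (Set.Iic m) = 0
  · have : ({m} : Set ℝ) ∩ {t | ξ (Set.Iic t) = 0} ⊆ Set.Iic m :=
      fun x hx => by simp [hx.1.le, Set.mem_Iic, le_of_eq hx.1]
    simp [measure_mono_null this (h m hm)]
  · have : ({m} : Set ℝ) ∩ {t | ξ (Set.Iic t) = 0} = ∅ := by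
      ext x; simp only [Set.mem_inter_iff, Set.mem_singleton_iff, Set.mem_setOf_eq,
        Set.mem_empty_iff_false, iff_false, not_and]
      rintro rfl; exact hm
    simp [this]

/-- Symmetry: `∫⁻ ζ'(Iic (v - t)) dζ(t) = ∫⁻ ζ(Iic (v - t)) dζ'(t)`; both sides equal the
product measure of `{(t,s) | t + s ≤ v}`. -/
lemma stmt11_sym_aux (ζ ζ' : Measure ℝ) [IsProbabilityMeasure ζ] [IsProbabilityMeasure ζ']
    (v : ℝ) :
    ∫⁻ t, ζ' (Set.Iic (v - t)) ∂ζ = ∫⁻ t, ζ (Set.Iic (v - t)) ∂ζ' := by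
  have hS : MeasurableSet {p : ℝ × ℝ | p.1 + p.2 ≤ v} :=
    measurableSet_le (measurable_fst.add measurable_snd) measurable_const
  have h1 : ∀ (μ ν : Measure ℝ) [SFinite ν],
      (μ.prod ν) {p : ℝ × ℝ | p.1 + p.2 ≤ v} = ∫⁻ t, ν (Set.Iic (v - t)) ∂μ := by
    intro μ ν _
    rw [Measure.prod_apply hS]
    refine lintegral_congr fun t => ?_
    congr 1
    ext s
    simp only [Set.mem_preimage, Set.mem_setOf_eq, Set.mem_Iic]
    constructor <;> intro <;> linarith
  rw [← h1 ζ ζ', ← h1 ζ' ζ, ← Measure.prod_swap (μ := ζ) (ν := ζ'),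
    Measure.map_apply measurable_swap hS]
  congr 1
  ext p
  simp only [Set.mem_preimage, Set.mem_setOf_eq, Prod.fst_swap, Prod.snd_swap]
  constructor <;> intro <;> linarith

/-- Main computation: under the fixed-point equation, the integral of `F` of the ratio
equals the (swapped) iterated lower integral. -/
lemma stmt11_main_aux (m : ℝ) (ξ ω : Measure ℝ) [IsProbabilityMeasure ξ]
    [IsProbabilityMeasure ω] (πhat : Measure ℕ)
    (hξsupp : ξ (Set.Iio m) = 0)
    (hXpos : ∀ t : ℝ, m < t → 0 < (ξ (Set.Iic t)).toReal)
    (F : ℝ → ℝ)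
    (hF : ∀ s ∈ Set.Icc (0:ℝ) 1, F (∑' k : ℕ, (πhat {k}).toReal * s ^ k) = 1 - s)
    (ζ ζ' : Measure ℝ) [IsProbabilityMeasure ζ] [IsProbabilityMeasure ζ']
    (h : ∀ t : ℝ, (ζ (Set.Iic t)).toReal =
      (ξ (Set.Iic t)).toReal * (∑' k : ℕ, (πhat {k}).toReal *
        (1 - ∫ v, (ζ' (Set.Iic (v - t))).toReal ∂ω) ^ k)) :
    ∫ t, F ((ζ (Set.Iic t)).toReal / (ξ (Set.Iic t)).toReal) ∂ζ
      = (∫⁻ v, ∫⁻ t, ζ' (Set.Iic (v - t)) ∂ζ ∂ω).toReal := by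
  set G : ℝ → ENNReal := fun t => ∫⁻ v, ζ' (Set.Iic (v - t)) ∂ω with hG
  have huncurry : Measurable (Function.uncurry fun (t v : ℝ) => ζ' (Set.Iic (v - t))) :=
    (stmt11_cdf_meas ζ').comp (measurable_snd.sub measurable_fst)
  have hGmeas : Measurable G := huncurry.lintegral_prod_right
  have hGle : ∀ t, G t ≤ 1 := fun t => by
    calc G t ≤ ∫⁻ _, 1 ∂ω := lintegral_mono fun v => prob_le_one
    _ = 1 := by simp
  have hInt : ∀ t, ∫ v, (ζ' (Set.Iic (v - t))).toReal ∂ω = (G t).toReal := fun t =>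
    integral_toReal ((stmt11_cdf_meas ζ').comp (measurable_id.sub measurable_const)).aemeasurable
      (ae_of_all _ fun v => measure_lt_top _ _)
  have hGicc : ∀ t, (G t).toReal ∈ Set.Icc (0:ℝ) 1 := fun t =>
    ⟨ENNReal.toReal_nonneg, by
      have := ENNReal.toReal_mono (by simp) (hGle t)
      simpa using this⟩
  have hnull : ζ {t | ξ (Set.Iic t) = 0} = 0 := by
    refine stmt11_null_aux m ξ ζ hξsupp (fun t ht hz => ?_) (fun t ht => ?_)
    · exact (hXpos t ht).ne' (by simp [hz])
    · have := h t
      rw [ht] at this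
      simp only [ENNReal.toReal_zero, zero_mul] at this
      exact (ENNReal.toReal_eq_zero_iff _).1 this |>.resolve_right (measure_ne_top _ _)
  have hane : ∀ᵐ t ∂ζ, ξ (Set.Iic t) ≠ 0 := by
    rw [MeasureTheory.ae_iff]
    simpa using hnull
  have hae : ∀ᵐ t ∂ζ, F ((ζ (Set.Iic t)).toReal / (ξ (Set.Iic t)).toReal) = (G t).toReal := by
    filter_upwards [hane] with t ht
    have hXne : (ξ (Set.Iic t)).toReal ≠ 0 :=
      ENNReal.toReal_ne_zero.2 ⟨ht, measure_ne_top _ _⟩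
    have hs : (1 - (G t).toReal) ∈ Set.Icc (0:ℝ) 1 := by
      obtain ⟨h0, h1⟩ := hGicc t
      constructor <;> [linarith; linarith]
    have hratio : (ζ (Set.Iic t)).toReal / (ξ (Set.Iic t)).toReal
        = ∑' k : ℕ, (πhat {k}).toReal * (1 - (G t).toReal) ^ k := by
      rw [h t, hInt t, mul_comm, mul_div_assoc, div_self hXne, mul_one]
    rw [hratio, hF _ hs]
    ring
  rw [integral_congr_ae hae,
    integral_toReal hGmeas.aemeasurable (ae_of_all _ fun t => lt_of_le_of_lt (hGle t) (by simp)),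
    lintegral_lintegral_swap huncurry.aemeasurable]

/-- The invariant identity. Let `ξ` be supported on `[m,∞)` with cdf `h_X` positive on
`(m,∞)`, `ω` atomless, `π̂` a probability measure on `ℕ` with `π̂({0}) < 1` and pgf `φ̂`,
and `F` satisfying `F(φ̂(s)) = 1 - s` on `[0,1]` (i.e. `F(u) = 1 - φ̂⁻¹(u)` on `[φ̂(0),1]`).
If `ζ₊, ζ₋` are probability measures whose cdfs `h₊, h₋` satisfy the system
`h₊(t) = h_X(t) · φ̂(1 - ∫ h₋(w-t) dω(w))` and `h₋(t) = h_X(t) · φ̂(1 - ∫ h₊(w-t) dω(w))`,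
then `∫ F(h₊(t)/h_X(t)) dζ₊(t) = ∫ F(h₋(t)/h_X(t)) dζ₋(t)`. -/
theorem stmt11 (m : ℝ) (ξ ω : Measure ℝ) [IsProbabilityMeasure ξ] [IsProbabilityMeasure ω]
    (πhat : Measure ℕ) [IsProbabilityMeasure πhat]
    (hξsupp : ξ (Set.Iio m) = 0)
    (hXpos : ∀ t : ℝ, m < t → 0 < (ξ (Set.Iic t)).toReal)
    (hωatomless : ∀ r : ℝ, ω {r} = 0)
    (hπ0 : πhat {0} < 1)
    (F : ℝ → ℝ)
    (hF : ∀ s ∈ Set.Icc (0:ℝ) 1, F (∑' k : ℕ, (πhat {k}).toReal * s ^ k) = 1 - s)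
    (ζp ζm : Measure ℝ) [IsProbabilityMeasure ζp] [IsProbabilityMeasure ζm]
    (hp : ∀ t : ℝ, (ζp (Set.Iic t)).toReal =
      (ξ (Set.Iic t)).toReal * (∑' k : ℕ, (πhat {k}).toReal *
        (1 - ∫ v, (ζm (Set.Iic (v - t))).toReal ∂ω) ^ k))
    (hm : ∀ t : ℝ, (ζm (Set.Iic t)).toReal =
      (ξ (Set.Iic t)).toReal * (∑' k : ℕ, (πhat {k}).toReal *
        (1 - ∫ v, (ζp (Set.Iic (v - t))).toReal ∂ω) ^ k)) :
    ∫ t, F ((ζp (Set.Iic t)).toReal / (ξ (Set.Iic t)).toReal) ∂ζp =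
      ∫ t, F ((ζm (Set.Iic t)).toReal / (ξ (Set.Iic t)).toReal) ∂ζm := by
  rw [stmt11_main_aux m ξ ω πhat hξsupp hXpos F hF ζp ζm hp,
    stmt11_main_aux m ξ ω πhat hξsupp hXpos F hF ζm ζp hm]
  congr 1
  exact lintegral_congr fun v => stmt11_sym_aux ζp ζm v
end
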